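/- arXiv:1404.4153 — 11 statements merged into one kernel-verified Lean document; each statement's English description precedes it below -/
import Mathlib

section
/- For any integers k > 1 and l > 0 and any non-negative integer t, there exists a positive integer x such that the base-k expansion of x·l has least significant nonzero digit equal to 1, and the gap between the exponent of the least significant nonzero digit and the exponent of the next nonzero digit is greater than t. That is, x·l = k^{w_1} + Σ_{q≥2} s_q k^{w_q} with w_2 - w_1 > t. -/
lemma getD_digits_aux (k : ℕ) (hk : 1 < k) : ∀ (i n : ℕ),
    (Nat.digits k n).getD i 0 = n / k ^ i % k := by
  intro i
  induction i with
  | zero =>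
    intro n
    rcases Nat.eq_zero_or_pos n with h | h
    · simp [h]
    · rw [Nat.digits_def' hk h]; simp
  | succ i ih =>
    intro n
    rcases Nat.eq_zero_or_pos n with h | h
    · simp [h]
    · rw [Nat.digits_def' hk h]
      simp only [List.getD_cons_succ]
      rw [ih, Nat.div_div_eq_div_mul, pow_succ']

lemma gcd_stab_aux (k l : ℕ) (hl : 0 < l) :
    ∃ i, Nat.gcd l (k ^ (i + 1)) = Nat.gcd l (k ^ i) := by
  by_contra h
  push_neg at h
  have mono : ∀ i, Nat.gcd l (k ^ i) ∣ Nat.gcd l (k ^ (i + 1)) := fun i =>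
    Nat.dvd_gcd (Nat.gcd_dvd_left _ _)
      ((Nat.gcd_dvd_right _ _).trans (pow_dvd_pow k (Nat.le_succ i)))
  have pos : ∀ i, 0 < Nat.gcd l (k ^ i) := fun i => Nat.gcd_pos_of_pos_left _ hl
  have grow : ∀ i, i + 1 ≤ Nat.gcd l (k ^ i) := by
    intro i
    induction i with
    | zero => exact pos 0
    | succ i ih =>
      have hlt : Nat.gcd l (k ^ i) < Nat.gcd l (k ^ (i + 1)) :=
        lt_of_le_of_ne (Nat.le_of_dvd (pos (i + 1)) (mono i)) (fun e => h i e.symm)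
      omega
  have h1 := grow l
  have h2 : Nat.gcd l (k ^ l) ≤ l := Nat.le_of_dvd hl (Nat.gcd_dvd_left _ _)
  omega

lemma exists_M_aux (u k c : ℕ) (hu : 0 < u) (hc : Nat.Coprime (k ^ c) u) :
    ∃ M : ℕ, 0 < M ∧ u ∣ 1 + k ^ c * M := by
  haveI : NeZero u := ⟨hu.ne'⟩
  have hunit : IsUnit ((k ^ c : ℕ) : ZMod u) := (ZMod.isUnit_iff_coprime _ _).2 hc
  set b : ℕ := (-(((k ^ c : ℕ) : ZMod u))⁻¹).val with hb
  refine ⟨b + u, by positivity, ?_⟩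
  have : ((1 + k ^ c * (b + u) : ℕ) : ZMod u) = 0 := by
    push_cast
    rw [ZMod.natCast_val, ZMod.cast_id, ZMod.natCast_self]
    ring_nf
    rw [← Nat.cast_pow, ZMod.mul_inv_of_unit _ hunit]
    ring
  exact (ZMod.natCast_eq_zero_iff _ _).1 this

/-- For k > 1, l > 0 and any t, there exists x > 0 such that the base-k
expansion of x*l has least significant nonzero digit equal to 1 (at some exponent w₁),
and all digits at exponents w₁+1, …, w₁+t vanish (so the gap to the next nonzero
exponent exceeds t). -/
theorem stmt_0 (k l t : ℕ) (hk : 1 < k) (hl : 0 < l) :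
    ∃ x : ℕ, 0 < x ∧ ∃ w₁ : ℕ,
      (Nat.digits k (x * l)).getD w₁ 0 = 1 ∧
      (∀ y, y < w₁ → (Nat.digits k (x * l)).getD y 0 = 0) ∧
      (∀ y, w₁ < y → y ≤ w₁ + t → (Nat.digits k (x * l)).getD y 0 = 0) := by
  have hk0 : 0 < k := by omega
  obtain ⟨i, hi⟩ := gcd_stab_aux k l hl
  set g : ℕ := Nat.gcd l (k ^ i) with hg
  have hgl : g ∣ l := Nat.gcd_dvd_left _ _
  have hgk : g ∣ k ^ i := Nat.gcd_dvd_right _ _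
  have hgpos : 0 < g := Nat.gcd_pos_of_pos_left _ hl
  set u : ℕ := l / g with hudef
  have hlgu : l = g * u := (Nat.mul_div_cancel' hgl).symm
  have hupos : 0 < u := Nat.div_pos (Nat.le_of_dvd hl hgl) hgpos
  have hcop : Nat.Coprime u k := by
    have hd1 : g * Nat.gcd u k ∣ l := by
      rw [hlgu]; exact mul_dvd_mul_left g (Nat.gcd_dvd_left u k)
    have hd2 : g * Nat.gcd u k ∣ k ^ (i + 1) := by
      rw [pow_succ]; exact mul_dvd_mul hgk (Nat.gcd_dvd_right u k)
    have hd3 : g * Nat.gcd u k ∣ g := (Nat.dvd_gcd hd1 hd2).trans (dvd_of_eq hi)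
    have hle : g * Nat.gcd u k ≤ g * 1 := by
      simpa using Nat.le_of_dvd hgpos hd3
    have dpos : 0 < Nat.gcd u k := Nat.gcd_pos_of_pos_left _ hupos
    have := Nat.le_of_mul_le_mul_left hle hgpos
    unfold Nat.Coprime
    omega
  have hcopc : Nat.Coprime (k ^ (t + 1)) u := (hcop.symm.pow_left _).symm.symm
  obtain ⟨M, hMpos, huM⟩ := exists_M_aux u k (t + 1) hupos ((hcop.symm).pow_left _)
  set n : ℕ := 1 + k ^ (t + 1) * M with hn
  have hnpos : 0 < n := by positivity
  have hld : l ∣ k ^ i * n := hlgu ▸ mul_dvd_mul hgk huM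
  refine ⟨k ^ i * n / l, Nat.div_pos (Nat.le_of_dvd (by positivity) hld) hl, i, ?_, ?_, ?_⟩
  all_goals rw [Nat.div_mul_cancel hld] <;> try skip
  · rw [getD_digits_aux k hk, Nat.mul_div_cancel_left n (pow_pos hk0 i), hn,
      pow_succ', mul_assoc, Nat.add_mul_mod_self_left]
    exact Nat.mod_eq_of_lt hk
  · intro y hy
    rw [getD_digits_aux k hk,
      show k ^ i = k ^ y * k ^ (i - y) from by rw [← pow_add]; congr 1; omega,
      mul_assoc, Nat.mul_div_cancel_left _ (pow_pos hk0 y),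
      show i - y = (i - y - 1) + 1 from by omega, pow_succ', mul_assoc, Nat.mul_mod_right]
  · intro y hy1 hy2
    rw [getD_digits_aux k hk,
      show k ^ y = k ^ i * k ^ (y - i) from by rw [← pow_add]; congr 1; omega,
      ← Nat.div_div_eq_div_mul, Nat.mul_div_cancel_left n (pow_pos hk0 i), hn,
      show k ^ (t + 1) = k ^ (y - i) * k ^ (t + 1 - (y - i)) from by rw [← pow_add]; congr 1; omega,
      mul_assoc, Nat.add_mul_div_left _ _ (pow_pos hk0 (y - i)),
      Nat.div_eq_of_lt (by exact one_lt_pow₀ (by omega) (by omega) : 1 < k ^ (y - i)),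
      zero_add,
      show t + 1 - (y - i) = (t + 1 - (y - i) - 1) + 1 from by omega,
      pow_succ', mul_assoc, Nat.mul_mod_right]
end

section
/- For any integers k > 1, l > 0 and any non-negative integers t and t', there exist positive integers x and X such that both x·l and X·l have base-k expansions whose least significant nonzero digit is 1, occurring at the same exponent (i.e., w_{xl}(1) = w_{Xl}(1)), with the gap to the next nonzero digit of x·l exceeding t and the gap to the next nonzero digit of X·l exceeding t'. -/
lemma digit_getD (k : ℕ) (hk : 1 < k) : ∀ (i n : ℕ), (Nat.digits k n).getD i 0 = n / k^i % k := by
  intro i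
  induction i with
  | zero =>
    intro n
    rcases Nat.eq_zero_or_pos n with h | h
    · simp [h]
    · rw [Nat.digits_def' hk h]; simp
  | succ i ih =>
    intro n
    rcases Nat.eq_zero_or_pos n with h | h
    · simp [h]
    · rw [Nat.digits_def' hk h]
      simp only [List.getD_cons_succ]
      rw [ih (n / k), Nat.div_div_eq_div_mul, ← pow_succ']

lemma key (k t w m : ℕ) (hk : 1 < k) (hm : m % k^(t+1) = 1) (n : ℕ) (hn : n = k^w * m) :
    (Nat.digits k n).getD w 0 = 1 ∧
    (∀ y, y < w → (Nat.digits k n).getD y 0 = 0) ∧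
    (∀ y, w < y → y ≤ w + t → (Nat.digits k n).getD y 0 = 0) := by
  have hk0 : 0 < k := by omega
  refine ⟨?_, ?_, ?_⟩
  · rw [digit_getD k hk, hn, Nat.mul_div_cancel_left _ (pow_pos hk0 w)]
    rw [← Nat.mod_mod_of_dvd m (dvd_pow_self k (Nat.succ_ne_zero t)), hm,
      Nat.one_mod_eq_one.mpr (by omega)]
  · intro y hy
    rw [digit_getD k hk, hn]
    have : k^w * m / k^y = k^(w-y) * m := by
      conv_lhs => rw [show w = y + (w - y) from by omega]
      rw [pow_add, mul_assoc, Nat.mul_div_cancel_left _ (pow_pos hk0 y)]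
    rw [this, Nat.mul_mod, Nat.pow_mod, Nat.mod_self, Nat.zero_pow (by omega), Nat.zero_mod,
      Nat.zero_mul, Nat.zero_mod]
  · intro y hy1 hy2
    rw [digit_getD k hk, hn]
    set j := y - w with hj
    have hj1 : 1 ≤ j := by omega
    have hj2 : j ≤ t := by omega
    have hdiv : k^w * m / k^y = m / k^j := by
      rw [show y = w + j from by omega, pow_add, Nat.mul_div_mul_left _ _ (pow_pos hk0 w)]
    rw [hdiv]
    obtain ⟨C, hC⟩ : ∃ C, m = 1 + k^(t+1) * C := ⟨m / k^(t+1), by have := Nat.div_add_mod m (k^(t+1)); omega⟩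
    have hsplit : k^(t+1) * C = (k^(t+1-j) * C) * k^j := by
      rw [mul_comm _ (k^j), ← mul_assoc, ← pow_add]
      congr 2; omega
    have : m / k^j = k^(t+1-j) * C := by
      rw [hC, hsplit, Nat.add_mul_div_right _ _ (pow_pos hk0 j),
        Nat.div_eq_of_lt (Nat.one_lt_pow (by omega) hk), Nat.zero_add]
    rw [this, Nat.mul_mod, Nat.pow_mod, Nat.mod_self, Nat.zero_pow (by omega), Nat.zero_mod,
      Nat.zero_mul, Nat.zero_mod]

lemma build (k l i d t : ℕ) (hk : 1 < k) (hl : 0 < l) (hd : 0 < d)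
    (hld : l ∣ k ^ i * (k ^ d - 1)) :
    ∃ x : ℕ, 0 < x ∧
      (Nat.digits k (x * l)).getD i 0 = 1 ∧
      (∀ y, y < i → (Nat.digits k (x * l)).getD y 0 = 0) ∧
      (∀ y, i < y → y ≤ i + t → (Nat.digits k (x * l)).getD y 0 = 0) := by
  have hk0 : 0 < k := lt_trans one_pos hk
  set e := d * (t + 1) with hedef
  set m := (k ^ e - 1) * (k ^ (t + 1) - 1) with hmdef
  set n := k ^ i * m with hndef
  have he : t + 1 ≤ e := Nat.le_mul_of_pos_left (t + 1) hd
  have he0 : e ≠ 0 := by positivity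
  have hdvd_m : k ^ d - 1 ∣ k ^ e - 1 := by
    have := Nat.sub_dvd_pow_sub_pow (k ^ d) 1 (t + 1)
    simpa [← pow_mul] using this
  have hln : l ∣ n :=
    hld.trans (mul_dvd_mul_left _ (hdvd_m.trans (dvd_mul_right _ _)))
  have h1e : 1 < k ^ e := Nat.one_lt_pow he0 hk
  have h1t : 1 < k ^ (t + 1) := Nat.one_lt_pow (Nat.succ_ne_zero t) hk
  have hn0 : 0 < n := by
    apply Nat.mul_pos (pow_pos hk0 i) (Nat.mul_pos (by omega) (by omega))
  have hmmod : m % k ^ (t + 1) = 1 := by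
    have hc1 : 1 ≤ k ^ e := h1e.le
    have hc2 : 1 ≤ k ^ (t + 1) := h1t.le
    have hcast : (m : ℤ) = ((k : ℤ) ^ e - 1) * ((k : ℤ) ^ (t + 1) - 1) := by
      rw [hmdef, Nat.cast_mul, Nat.cast_sub hc1, Nat.cast_sub hc2]; push_cast; ring
    have hA : ((k : ℤ) ^ e - 1) ≡ (0 - 1) [ZMOD ((k : ℤ) ^ (t + 1))] :=
      (Int.modEq_zero_iff_dvd.mpr (pow_dvd_pow _ he)).sub_right 1
    have hB : ((k : ℤ) ^ (t + 1) - 1) ≡ (0 - 1) [ZMOD ((k : ℤ) ^ (t + 1))] :=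
      (Int.modEq_zero_iff_dvd.mpr dvd_rfl).sub_right 1
    have hAB := hA.mul hB
    have hzmod : (m : ℤ) % (k : ℤ) ^ (t + 1) = 1 % (k : ℤ) ^ (t + 1) := by
      rw [hcast]
      exact (by simpa using hAB : ((k : ℤ) ^ e - 1) * ((k : ℤ) ^ (t + 1) - 1) ≡ 1 [ZMOD ((k : ℤ) ^ (t + 1))])
    have h1k : (1 : ℤ) < (k : ℤ) ^ (t + 1) := by exact_mod_cast h1t
    have : (m : ℤ) % (k : ℤ) ^ (t + 1) = 1 := by
      rw [hzmod, Int.emod_eq_of_lt (by norm_num) h1k]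
    exact_mod_cast this
  obtain ⟨hkey1, hkey2, hkey3⟩ := key k t i m hk hmmod n hndef
  have hx : n / l * l = n := Nat.div_mul_cancel hln
  exact ⟨n / l, Nat.div_pos (Nat.le_of_dvd hn0 hln) hl,
    by rw [hx]; exact hkey1, by rw [hx]; exact hkey2, by rw [hx]; exact hkey3⟩

/-- For k > 1, l > 0 and any t, t', there exist x, X > 0 such that both
x*l and X*l have base-k expansions whose least significant nonzero digit is 1,
occurring at the same exponent w₁, with the gap to the next nonzero digit of x*l
exceeding t and the gap to the next nonzero digit of X*l exceeding t'. -/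
theorem stmt_1 (k l t t' : ℕ) (hk : 1 < k) (hl : 0 < l) :
    ∃ x X : ℕ, 0 < x ∧ 0 < X ∧ ∃ w₁ : ℕ,
      (Nat.digits k (x * l)).getD w₁ 0 = 1 ∧
      (∀ y, y < w₁ → (Nat.digits k (x * l)).getD y 0 = 0) ∧
      (∀ y, w₁ < y → y ≤ w₁ + t → (Nat.digits k (x * l)).getD y 0 = 0) ∧
      (Nat.digits k (X * l)).getD w₁ 0 = 1 ∧
      (∀ y, y < w₁ → (Nat.digits k (X * l)).getD y 0 = 0) ∧
      (∀ y, w₁ < y → y ≤ w₁ + t' → (Nat.digits k (X * l)).getD y 0 = 0) := by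
  have hk0 : 0 < k := lt_trans one_pos hk
  obtain ⟨i, j, hij, heq⟩ : ∃ i j, i < j ∧ k ^ i % l = k ^ j % l := by
    obtain ⟨a, ha, b, hb, hne, hfeq⟩ := Finset.exists_ne_map_eq_of_card_lt_of_maps_to
      (s := Finset.range (l + 1)) (t := Finset.range l) (by simp)
      (fun a _ => Finset.mem_range.mpr (Nat.mod_lt _ hl))
    rcases lt_or_gt_of_ne hne with h | h
    exacts [⟨a, b, h, hfeq⟩, ⟨b, a, h, hfeq.symm⟩]
  set d := j - i with hddef
  have hd : 0 < d := by omega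
  have hld : l ∣ k ^ i * (k ^ d - 1) := by
    have h1 : l ∣ k ^ j - k ^ i :=
      (Nat.modEq_iff_dvd' (Nat.pow_le_pow_right hk0 hij.le)).mp heq
    have h2 : k ^ i * (k ^ d - 1) = k ^ j - k ^ i := by
      rw [Nat.mul_sub, mul_one, ← pow_add, show i + d = j from by omega]
    rwa [h2]
  obtain ⟨x, hx0, hx1, hx2, hx3⟩ := build k l i d t hk hl hd hld
  obtain ⟨X, hX0, hX1, hX2, hX3⟩ := build k l i d t' hk hl hd hld
  exact ⟨x, X, hx0, hX0, i, hx1, hx2, hx3, hX1, hX2, hX3⟩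
end

section
/- Fix integers k, L > 1 and a map κ : {1,…,k-1} × ℕ → {0,…,L-1}. Define b : ℕ → ℂ by b(n) = Π_q exp(2πi·κ(s_q, w_q)/L), where n = Σ_q s_q k^{w_q} is the base-k expansion of n (and b(0) = 1). Then for |z| < 1, the power series Σ_{n≥0} b(n) z^n equals the absolutely convergent infinite product Π_{y≥0} (1 + Σ_{s=1}^{k-1} exp(2πi·κ(s,y)/L) z^{s·k^y}). -/
open scoped BigOperators

/-- The unit-valued sequence b(n) = ∏_q exp(2πi·κ(s_q,w_q)/L), the product taken over
the nonzero digits s_q (at exponents w_q) of the base-k expansion of n; b(0) = 1. -/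
noncomputable def tmSeq (k L : ℕ) (κ : ℕ → ℕ → ℕ) (n : ℕ) : ℂ :=
  ∏ y ∈ Finset.range (Nat.digits k n).length,
    if (Nat.digits k n).getD y 0 ≠ 0 then
      Complex.exp (2 * Real.pi * Complex.I * (κ ((Nat.digits k n).getD y 0) y) / L)
    else 1

lemma norm_eterm (L m : ℕ) : ‖Complex.exp (2 * Real.pi * Complex.I * m / L)‖ = 1 := by
  have h : (2 * (Real.pi : ℂ) * Complex.I * m / L)
      = ((2 * Real.pi * m / L : ℝ) : ℂ) * Complex.I := by
    push_cast; ring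
  rw [h, Complex.norm_exp_ofReal_mul_I]

lemma tmSeq_norm (k L : ℕ) (κ : ℕ → ℕ → ℕ) (n : ℕ) : ‖tmSeq k L κ n‖ = 1 := by
  unfold tmSeq
  rw [norm_prod]
  apply Finset.prod_eq_one
  intro y _
  split
  · exact norm_eterm L _
  · simp

lemma tmSeq_zero (k L : ℕ) (κ : ℕ → ℕ → ℕ) : tmSeq k L κ 0 = 1 := by
  simp [tmSeq]

lemma tmSeq_rec (k L : ℕ) (hk : 1 < k) (κ : ℕ → ℕ → ℕ) (r m : ℕ) (hr : r < k) :
    tmSeq k L κ (r + k * m)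
      = (if r ≠ 0 then Complex.exp (2 * Real.pi * Complex.I * (κ r 0) / L) else 1)
        * tmSeq k L (fun s y => κ s (y + 1)) m := by
  by_cases hn : r + k * m = 0
  · have hr0 : r = 0 := by omega
    have hm0 : m = 0 := by nlinarith [hn]
    subst hr0; subst hm0
    simp [tmSeq_zero]
  · have hmod : (r + k * m) % k = r := by
      rw [Nat.add_mul_mod_self_left, Nat.mod_eq_of_lt hr]
    have hdiv : (r + k * m) / k = m := by
      rw [Nat.add_mul_div_left _ _ (by omega : 0 < k), Nat.div_eq_of_lt hr]; omega
    have hd : Nat.digits k (r + k * m) = r :: Nat.digits k m := by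
      rw [Nat.digits_def' hk (Nat.pos_of_ne_zero hn), hmod, hdiv]
    unfold tmSeq
    rw [hd, List.length_cons, Finset.prod_range_succ']
    rw [mul_comm]
    refine congrArg₂ (· * ·) ?_ ?_
    · simp
    · exact Finset.prod_congr rfl fun y _ => by simp

lemma sum_range_mul_decomp {M : Type*} [AddCommMonoid M] (f : ℕ → M) (a b : ℕ) :
    ∑ n ∈ Finset.range (a * b), f n
      = ∑ m ∈ Finset.range b, ∑ r ∈ Finset.range a, f (r + a * m) := by
  induction b with
  | zero => simp
  | succ b ih =>
      rw [Nat.mul_succ, Finset.sum_range_add, ih, Finset.sum_range_succ]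
      congr 1
      apply Finset.sum_congr rfl
      intro r _
      congr 1
      ring

lemma key_identity (k L : ℕ) (hk : 1 < k) :
    ∀ (N : ℕ) (κ : ℕ → ℕ → ℕ) (z : ℂ),
    ∑ n ∈ Finset.range (k ^ N), tmSeq k L κ n * z ^ n
      = ∏ y ∈ Finset.range N, (1 + ∑ s ∈ Finset.Icc 1 (k - 1),
          Complex.exp (2 * Real.pi * Complex.I * (κ s y) / L) * z ^ (s * k ^ y)) := by
  intro N
  induction N with
  | zero => intro κ z; simp [tmSeq_zero]
  | succ N ih =>
      intro κ z
      have hsplit : Finset.range k = insert 0 (Finset.Icc 1 (k - 1)) := by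
        ext x; simp; omega
      have hpow : k ^ (N + 1) = k * k ^ N := by ring
      rw [hpow, sum_range_mul_decomp]
      have hinner : ∀ m ∈ Finset.range (k ^ N),
          ∑ r ∈ Finset.range k, tmSeq k L κ (r + k * m) * z ^ (r + k * m)
            = (tmSeq k L (fun s y => κ s (y + 1)) m * (z ^ k) ^ m)
              * (1 + ∑ s ∈ Finset.Icc 1 (k - 1),
                  Complex.exp (2 * Real.pi * Complex.I * (κ s 0) / L) * z ^ (s * k ^ 0)) := by
        intro m _
        rw [hsplit, Finset.sum_insert (by simp)]
        rw [mul_add, mul_one, Finset.mul_sum]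
        congr 1
        · rw [tmSeq_rec k L hk κ 0 m (by omega)]
          simp [pow_mul, mul_comm]
        · apply Finset.sum_congr rfl
          intro s hs
          simp only [Finset.mem_Icc] at hs
          rw [tmSeq_rec k L hk κ s m (by omega), if_pos (by omega)]
          rw [pow_add, pow_mul]
          simp [pow_mul]
          ring
      rw [Finset.sum_congr rfl hinner, ← Finset.sum_mul, ih (fun s y => κ s (y + 1)) (z ^ k)]
      rw [Finset.prod_range_succ']
      congr 1
      apply Finset.prod_congr rfl
      intro y _
      congr 1
      apply Finset.sum_congr rfl
      intro s _
      rw [← pow_mul]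
      congr 2
      ring

/-- For |z| < 1 the generating series Σ b(n) zⁿ converges and equals the
(multipliable) infinite product ∏_y (1 + Σ_{s=1}^{k-1} exp(2πi·κ(s,y)/L) z^{s·kʸ}). -/
theorem stmt_6 (k L : ℕ) (hk : 1 < k) (hL : 1 < L) (κ : ℕ → ℕ → ℕ)
    (hκ : ∀ s y, κ s y < L) (z : ℂ) (hz : ‖z‖ < 1) :
    Summable (fun n : ℕ => tmSeq k L κ n * z ^ n) ∧
    Multipliable (fun y : ℕ => 1 + ∑ s ∈ Finset.Icc 1 (k - 1),
        Complex.exp (2 * Real.pi * Complex.I * (κ s y) / L) * z ^ (s * k ^ y)) ∧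
    (∑' n : ℕ, tmSeq k L κ n * z ^ n) =
      ∏' y : ℕ, (1 + ∑ s ∈ Finset.Icc 1 (k - 1),
        Complex.exp (2 * Real.pi * Complex.I * (κ s y) / L) * z ^ (s * k ^ y)) := by
  set f : ℕ → ℂ := fun y => 1 + ∑ s ∈ Finset.Icc 1 (k - 1),
      Complex.exp (2 * Real.pi * Complex.I * (κ s y) / L) * z ^ (s * k ^ y) with hf
  set g : ℕ → ℂ := fun y => ∑ s ∈ Finset.Icc 1 (k - 1),
      Complex.exp (2 * Real.pi * Complex.I * (κ s y) / L) * z ^ (s * k ^ y) with hg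
  -- bound on g
  have hgB : ∀ y, ‖g y‖ ≤ (k - 1 : ℝ) * ‖z‖ ^ y := by
    intro y
    calc ‖g y‖ ≤ ∑ s ∈ Finset.Icc 1 (k - 1),
        ‖Complex.exp (2 * Real.pi * Complex.I * (κ s y) / L) * z ^ (s * k ^ y)‖ :=
          norm_sum_le _ _
      _ ≤ ∑ s ∈ Finset.Icc 1 (k - 1), ‖z‖ ^ y := by
          apply Finset.sum_le_sum
          intro s hs
          simp only [Finset.mem_Icc] at hs
          rw [norm_mul, norm_eterm, one_mul, norm_pow]
          apply pow_le_pow_of_le_one (norm_nonneg z) hz.le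
          calc y ≤ k ^ y := (Nat.lt_pow_self (n := y) hk).le
            _ ≤ s * k ^ y := Nat.le_mul_of_pos_left _ (by omega)
      _ = ((k - 1 : ℕ) : ℝ) * ‖z‖ ^ y := by
          rw [Finset.sum_const, Nat.card_Icc]
          simp
      _ = (k - 1 : ℝ) * ‖z‖ ^ y := by
          rw [Nat.cast_sub (by omega : 1 ≤ k)]
          norm_num
  have hBsum : Summable (fun y : ℕ => (k - 1 : ℝ) * ‖z‖ ^ y) :=
    (summable_geometric_of_lt_one (norm_nonneg z) hz).mul_left _
  have hsum : Summable (fun n : ℕ => tmSeq k L κ n * z ^ n) := by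
    apply Summable.of_norm_bounded (g := fun n => ‖z‖ ^ n)
      (summable_geometric_of_lt_one (norm_nonneg z) hz)
    intro n
    rw [norm_mul, tmSeq_norm, one_mul, norm_pow]
  have hmult : Multipliable f := by
    by_cases hzero : ∃ y, f y = 0
    · obtain ⟨y0, hy0⟩ := hzero
      refine ⟨0, ?_⟩
      rw [HasProd]
      apply Filter.Tendsto.congr' _ tendsto_const_nhds
      filter_upwards [Filter.eventually_ge_atTop ({y0} : Finset ℕ)] with s hs
      exact (Finset.prod_eq_zero (hs (Finset.mem_singleton_self y0)) hy0).symm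
    · push_neg at hzero
      have hlogsum : Summable (fun y => Complex.log (f y)) := by
        have htend : Filter.Tendsto (fun y : ℕ => (k - 1 : ℝ) * ‖z‖ ^ y)
            Filter.atTop (nhds 0) := hBsum.tendsto_atTop_zero
        have hev : ∀ᶠ y in Filter.atTop, ‖g y‖ ≤ 1 / 2 := by
          filter_upwards [htend.eventually_le_const (by norm_num : (0:ℝ) < 1/2)] with y hy
          exact (hgB y).trans hy
        apply Summable.of_norm_bounded_eventually_nat
          (g := fun y => 3 / 2 * ((k - 1 : ℝ) * ‖z‖ ^ y)) (hBsum.mul_left _)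
        filter_upwards [hev] with y hy
        have : f y = 1 + g y := rfl
        rw [this]
        calc ‖Complex.log (1 + g y)‖ ≤ 3 / 2 * ‖g y‖ :=
              Complex.norm_log_one_add_half_le_self hy
          _ ≤ 3 / 2 * ((k - 1 : ℝ) * ‖z‖ ^ y) := by
              apply mul_le_mul_of_nonneg_left (hgB y) (by norm_num)
      exact Complex.multipliable_of_summable_log hlogsum
  refine ⟨hsum, hmult, ?_⟩
  have h1 : Filter.Tendsto (fun N => ∏ y ∈ Finset.range N, f y)
      Filter.atTop (nhds (∏' y, f y)) := hmult.hasProd.tendsto_prod_nat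
  have hpowt : Filter.Tendsto (fun N : ℕ => k ^ N) Filter.atTop Filter.atTop :=
    tendsto_pow_atTop_atTop_of_one_lt hk
  have h2 : Filter.Tendsto (fun N : ℕ => ∑ n ∈ Finset.range (k ^ N), tmSeq k L κ n * z ^ n)
      Filter.atTop (nhds (∑' n, tmSeq k L κ n * z ^ n)) :=
    hsum.hasSum.tendsto_sum_nat.comp hpowt
  have h3 : Filter.Tendsto (fun N => ∏ y ∈ Finset.range N, f y)
      Filter.atTop (nhds (∑' n, tmSeq k L κ n * z ^ n)) := by
    apply h2.congr
    intro N
    exact key_identity k L hk N κ z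
  exact tendsto_nhds_unique h3 h1
end

section
/- Let k, L > 1 and κ : {1,…,k-1} × ℕ → ℤ/L, and define a(n) ≡ Σ_q κ(s_q, w_q) (mod L) from the base-k digits of n. If there exists A ∈ ℕ such that κ(s, A+y) ≡ κ(1,A)·s·k^y (mod L) for all s ∈ {1,…,k-1} and all y ∈ ℕ, then the sequence (a(n))_{n≥0} is periodic with period L·k^A, i.e., a(n + L·k^A) = a(n) for all n ≥ 0. -/
open scoped BigOperators

/-- The generalized Thue–Morse sequence of type (L,k,κ):
a(n) = Σ_q κ(s_q, w_q) in ℤ/L, over the nonzero base-k digits of n. -/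
def gtm (k L : ℕ) (κ : ℕ → ℕ → ZMod L) (n : ℕ) : ZMod L :=
  ∑ y ∈ Finset.range (Nat.digits k n).length,
    if (Nat.digits k n).getD y 0 ≠ 0 then κ ((Nat.digits k n).getD y 0) y else 0

/-- Sum of κ over a digit list with an offset. -/
def gtmS {L : ℕ} (κ : ℕ → ℕ → ZMod L) (off : ℕ) (l : List ℕ) : ZMod L :=
  ∑ y ∈ Finset.range l.length,
    if l.getD y 0 ≠ 0 then κ (l.getD y 0) (off + y) else 0

lemma gtmS_cons {L : ℕ} (κ : ℕ → ℕ → ZMod L) (off a : ℕ) (l : List ℕ) :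
    gtmS κ off (a :: l) = (if a ≠ 0 then κ a off else 0) + gtmS κ (off + 1) l := by
  unfold gtmS
  rw [List.length_cons, Finset.sum_range_succ']
  simp only [List.getD_cons_succ, List.getD_cons_zero, add_zero]
  rw [add_comm]
  congr 1
  apply Finset.sum_congr rfl
  intro y _
  have : off + (y + 1) = off + 1 + y := by ring
  rw [this]

lemma gtmS_append {L : ℕ} (κ : ℕ → ℕ → ZMod L) (l1 l2 : List ℕ) :
    ∀ off, gtmS κ off (l1 ++ l2) = gtmS κ off l1 + gtmS κ (off + l1.length) l2 := by
  induction l1 with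
  | nil => intro off; simp [gtmS]
  | cons a l ih =>
      intro off
      rw [List.cons_append, gtmS_cons, gtmS_cons, ih (off + 1), List.length_cons]
      have h : off + 1 + l.length = off + (l.length + 1) := by omega
      rw [h, add_assoc]

lemma gtmS_replicate_zero {L : ℕ} (κ : ℕ → ℕ → ZMod L) (p : ℕ) :
    ∀ off, gtmS κ off (List.replicate p 0) = 0 := by
  induction p with
  | zero => intro off; simp [gtmS]
  | succ p ih =>
      intro off
      rw [List.replicate_succ, gtmS_cons, ih]
      simp

lemma ofDigits_eq_sum_getD {L : ℕ} (b : ZMod L) (l : List ℕ) :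
    Nat.ofDigits b l = ∑ y ∈ Finset.range l.length, (l.getD y 0 : ZMod L) * b ^ y := by
  induction l with
  | nil => simp [Nat.ofDigits]
  | cons a l ih =>
      rw [show Nat.ofDigits b (a :: l) = (a : ZMod L) + b * Nat.ofDigits b l from rfl,
        List.length_cons, Finset.sum_range_succ']
      simp only [List.getD_cons_succ, List.getD_cons_zero, pow_zero, mul_one]
      rw [ih, Finset.mul_sum, add_comm]
      congr 1
      apply Finset.sum_congr rfl
      intro y _
      rw [pow_succ]
      ring

lemma gtmS_high {k L : ℕ} (hk : 1 < k) (κ : ℕ → ℕ → ZMod L) (A : ℕ)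
    (hκ : ∀ s y : ℕ, 1 ≤ s → s ≤ k - 1 →
      κ s (A + y) = κ 1 A * (s : ZMod L) * (k : ZMod L) ^ y) (d : ℕ) :
    gtmS κ A (Nat.digits k d) = κ 1 A * (d : ZMod L) := by
  have hcast : ((d : ℕ) : ZMod L) = Nat.ofDigits (k : ZMod L) (Nat.digits k d) := by
    conv_lhs => rw [← Nat.ofDigits_digits k d]
    exact_mod_cast (Nat.coe_ofDigits (ZMod L) k (Nat.digits k d))
  rw [hcast, ofDigits_eq_sum_getD, Finset.mul_sum]
  unfold gtmS
  apply Finset.sum_congr rfl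
  intro y hy
  set s := (Nat.digits k d).getD y 0 with hs
  by_cases h0 : s = 0
  · simp [h0]
  · have hmem : s ∈ Nat.digits k d := by
      rw [hs]
      rw [Finset.mem_range] at hy
      rw [List.getD_eq_getElem _ _ hy]
      exact List.getElem_mem _
    have hlt : s < k := Nat.digits_lt_base hk hmem
    have h1 : 1 ≤ s := Nat.one_le_iff_ne_zero.mpr h0
    have h2 : s ≤ k - 1 := by omega
    rw [if_pos h0, hκ s y h1 h2]
    ring

lemma gtm_decomp (k L : ℕ) (hk : 1 < k) (κ : ℕ → ℕ → ZMod L) (A : ℕ)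
    (hκ : ∀ s y : ℕ, 1 ≤ s → s ≤ k - 1 →
      κ s (A + y) = κ 1 A * (s : ZMod L) * (k : ZMod L) ^ y) (n : ℕ) :
    gtm k L κ n = gtmS κ 0 (Nat.digits k (n % k ^ A)) + κ 1 A * ((n / k ^ A : ℕ) : ZMod L) := by
  have hgtm : gtm k L κ n = gtmS κ 0 (Nat.digits k n) := by
    unfold gtm gtmS
    simp
  set m := n % k ^ A with hm
  set d := n / k ^ A with hd
  have hkpos : 0 < k ^ A := Nat.pow_pos (by omega)
  by_cases hd0 : d = 0
  · have hn : n < k ^ A := by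
      by_contra hcon
      have := Nat.div_le_div_right (c := k ^ A) (le_of_not_gt hcon)
      rw [Nat.div_self hkpos] at this
      omega
    rw [hgtm, hm, Nat.mod_eq_of_lt hn, hd0]
    simp
  · have hmlt : m < k ^ A := Nat.mod_lt _ hkpos
    have hlen : (Nat.digits k m).length ≤ A := by
      by_cases hm0 : m = 0
      · simp [hm0]
      · rw [Nat.digits_len k m hk hm0]
        have := Nat.log_lt_of_lt_pow hm0 hmlt
        omega
    set len := (Nat.digits k m).length with hlendef
    have hdig : Nat.digits k m ++ List.replicate (A - len) 0 ++ Nat.digits k d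
        = Nat.digits k n := by
      have := Nat.digits_append_zeroes_append_digits (b := k) (k := A - len) (m := d) (n := m)
        hk (Nat.pos_of_ne_zero hd0)
      rw [this]
      congr 1
      have hA : len + (A - len) = A := by omega
      rw [hA, hm, hd]
      exact Nat.mod_add_div n (k ^ A)
    rw [hgtm, ← hdig, gtmS_append, gtmS_append, gtmS_replicate_zero]
    simp only [List.length_append, List.length_replicate, add_zero, zero_add]
    have hA : len + (A - len) = A := by omega
    rw [hA, gtmS_high hk κ A hκ d]

/-- if κ(s,A+y) ≡ κ(1,A)·s·kʸ (mod L) for all digits s and all y,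
then the generalized Thue–Morse sequence is periodic with period L·k^A. -/
theorem stmt_10 (k L : ℕ) (hk : 1 < k) (hL : 1 < L) (κ : ℕ → ℕ → ZMod L) (A : ℕ)
    (hκ : ∀ s y : ℕ, 1 ≤ s → s ≤ k - 1 →
      κ s (A + y) = κ 1 A * (s : ZMod L) * (k : ZMod L) ^ y) :
    ∀ n : ℕ, gtm k L κ (n + L * k ^ A) = gtm k L κ n := by
  intro n
  have hkpos : 0 < k ^ A := Nat.pow_pos (by omega)
  rw [gtm_decomp k L hk κ A hκ n, gtm_decomp k L hk κ A hκ (n + L * k ^ A)]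
  have hmod : (n + L * k ^ A) % k ^ A = n % k ^ A := by
    simp [Nat.add_mul_mod_self_right]
  have hdiv : (n + L * k ^ A) / k ^ A = n / k ^ A + L := by
    rw [Nat.add_mul_div_right _ _ hkpos]
  rw [hmod, hdiv]
  push_cast
  rw [ZMod.natCast_self]
  ring
end

section
/- Let k, L > 1, κ : {1,…,k-1} × ℕ → ℤ/L, and a(n) ≡ Σ_q κ(s_q, w_q) (mod L) from the base-k digits of n. Then (a(n))_{n≥0} is ultimately periodic if and only if there exists A ∈ ℕ with κ(s, A+y) ≡ κ(1,A)·s·k^y (mod L) for all s ∈ {1,…,k-1} and y ∈ ℕ. -/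
open scoped BigOperators

lemma gtm_zero (k L : ℕ) (κ : ℕ → ℕ → ZMod L) : gtm k L κ 0 = 0 := by simp [gtm]

lemma gtm_add_single {k L : ℕ} (κ : ℕ → ℕ → ZMod L) (hk : 1 < k) {m s W : ℕ}
    (hm : m < k ^ W) (hs1 : 0 < s) (hs2 : s < k) :
    gtm k L κ (m + s * k ^ W) = gtm k L κ m + κ s W := by
  set D := Nat.digits k m with hD
  have hDW : D.length ≤ W := by
    rcases Nat.eq_zero_or_pos m with rfl | hm0
    · simp [hD]
    · rw [hD, Nat.digits_len k m hk hm0.ne']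
      have := Nat.log_lt_of_lt_pow hm0.ne' hm
      omega
  set e := W - D.length with he
  have hW : D.length + e = W := by omega
  have hdig : Nat.digits k (m + s * k ^ W) = D ++ List.replicate e 0 ++ [s] := by
    have h1 : m + s * k ^ W = m + k ^ (D.length + e) * s := by rw [hW]; ring
    rw [h1, ← Nat.digits_append_zeroes_append_digits hk hs1,
      Nat.digits_of_lt k s hs1.ne' hs2]
  have hlen : (Nat.digits k (m + s * k ^ W)).length = W + 1 := by
    simp [hdig]; omega
  have hlen2 : (D ++ List.replicate e 0).length = W := by simp; omega
  have hgetW : (D ++ List.replicate e 0 ++ [s]).getD W 0 = s := by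
    rw [List.getD_append_right _ _ _ _ (le_of_eq hlen2)]
    simp [hlen2]
  have hget : ∀ y, y < W → (D ++ List.replicate e 0 ++ [s]).getD y 0 = D.getD y 0 := by
    intro y hy
    rw [List.getD_append _ _ _ _ (by simp; omega)]
    rcases lt_or_ge y D.length with h | h
    · rw [List.getD_append _ _ _ _ h]
    · rw [List.getD_append_right _ _ _ _ h, List.getD_eq_default _ _ h]
      rcases lt_or_ge (y - D.length) e with h2 | h2
      · rw [List.getD_eq_getElem _ _ (by simpa using h2)]; simp
      · rw [List.getD_eq_default _ _ (by simpa using h2)]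
  show (∑ y ∈ Finset.range (Nat.digits k (m + s * k ^ W)).length, _) = _
  rw [hlen, hdig, Finset.sum_range_succ, hgetW, if_pos hs1.ne']
  congr 1
  rw [Finset.sum_congr rfl (fun y hy => by
    rw [hget y (Finset.mem_range.mp hy)])]
  symm
  show (∑ y ∈ Finset.range D.length, _) = _
  apply Finset.sum_subset (Finset.range_subset_range.mpr hDW)
  intro y _ hy
  rw [List.getD_eq_default _ _ (by simpa using hy)]
  simp

lemma gtm_single {k L : ℕ} (κ : ℕ → ℕ → ZMod L) (hk : 1 < k) {s W : ℕ}
    (hs1 : 0 < s) (hs2 : s < k) : gtm k L κ (s * k ^ W) = κ s W := by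
  have := gtm_add_single κ hk (m := 0) (pow_pos (by omega) W) hs1 hs2
  simpa [gtm_zero] using this

/-- If κ has the linear form from `A` on, then gtm is linear in the high part. -/
lemma gtm_high {k L : ℕ} (κ : ℕ → ℕ → ZMod L) (hk : 1 < k) (A : ℕ)
    (hκ : ∀ s y : ℕ, 1 ≤ s → s ≤ k - 1 →
      κ s (A + y) = κ 1 A * (s : ZMod L) * (k : ZMod L) ^ y) :
    ∀ h m : ℕ, m < k ^ A →
      gtm k L κ (m + h * k ^ A) = gtm k L κ m + κ 1 A * (h : ZMod L) := by
  intro h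
  induction h using Nat.strong_induction_on with
  | _ h ih =>
    intro m hm
    rcases Nat.eq_zero_or_pos h with rfl | hh
    · simp
    · set t := Nat.log k h with ht
      have h1 : k ^ t ≤ h := Nat.pow_log_le_self k hh.ne'
      have h2 : h < k ^ (t + 1) := Nat.lt_pow_succ_log_self hk h
      set s := h / k ^ t with hs
      set h₀ := h % k ^ t with hh0def
      have hkt : 0 < k ^ t := pow_pos (by omega) t
      have hs1 : 1 ≤ s := (Nat.one_le_div_iff hkt).mpr h1
      have hs2 : s < k := by
        rw [hs, Nat.div_lt_iff_lt_mul hkt]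
        calc h < k ^ (t + 1) := h2
        _ = k * k ^ t := by ring
      have hh0 : h₀ < k ^ t := Nat.mod_lt _ hkt
      have hdecomp : h = h₀ + s * k ^ t := (Nat.mod_add_div' h (k ^ t)).symm
      have key : m + h * k ^ A = (m + h₀ * k ^ A) + s * k ^ (A + t) := by
        rw [hdecomp, pow_add]; ring
      have hlt : m + h₀ * k ^ A < k ^ (A + t) := by
        have : (1 + h₀) * k ^ A ≤ k ^ t * k ^ A :=
          Nat.mul_le_mul_right _ (by omega)
        rw [pow_add]
        calc m + h₀ * k ^ A < k ^ A + h₀ * k ^ A := by omega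
        _ = (1 + h₀) * k ^ A := by ring
        _ ≤ k ^ t * k ^ A := this
        _ = k ^ A * k ^ t := by ring
      have hh0lt : h₀ < h := lt_of_lt_of_le hh0 h1
      rw [key, gtm_add_single κ hk hlt hs1 hs2, ih h₀ hh0lt m hm,
        hκ s t hs1 (by omega)]
      have : ((h : ℕ) : ZMod L) = ((h₀ : ℕ) : ZMod L) + (s : ZMod L) * (k : ZMod L) ^ t := by
        rw [hdecomp]; push_cast; ring
      rw [this]; ring

lemma sum_pow_lt {k p : ℕ} (hk : 1 < k) (hp : 0 < p) :
    ∀ (r W : ℕ), ∑ i ∈ Finset.range r, k ^ (W + i * p) < k ^ (W + r * p) := by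
  intro r
  induction r with
  | zero => intro W; simpa using pow_pos (by omega) W
  | succ r ih =>
    intro W
    rw [Finset.sum_range_succ]
    have h1 : ∑ i ∈ Finset.range r, k ^ (W + i * p) < k ^ (W + r * p) := ih W
    have h2 : 2 * k ^ (W + r * p) ≤ k ^ (W + (r + 1) * p) := by
      calc 2 * k ^ (W + r * p) ≤ k * k ^ (W + r * p) := Nat.mul_le_mul_right _ hk
      _ = k ^ (W + r * p + 1) := by ring
      _ ≤ k ^ (W + (r + 1) * p) := Nat.pow_le_pow_right (by omega) (by nlinarith)
    omega

lemma gtm_sum_pow {k L : ℕ} (κ : ℕ → ℕ → ZMod L) (hk : 1 < k) {p : ℕ} (hp : 0 < p) :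
    ∀ (r W : ℕ), gtm k L κ (∑ i ∈ Finset.range r, k ^ (W + i * p)) =
      ∑ i ∈ Finset.range r, κ 1 (W + i * p) := by
  intro r
  induction r with
  | zero => intro W; simp [gtm_zero]
  | succ r ih =>
    intro W
    rw [Finset.sum_range_succ, Finset.sum_range_succ, ← ih W]
    have := gtm_add_single κ hk (m := ∑ i ∈ Finset.range r, k ^ (W + i * p))
      (s := 1) (W := W + r * p) (sum_pow_lt hk hp r W) one_pos hk
    simpa using this


/-- the generalized Thue–Morse sequence is ultimately periodic iff
there is A with κ(s,A+y) ≡ κ(1,A)·s·kʸ (mod L) for all digits s and all y. -/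
theorem stmt_11 (k L : ℕ) (hk : 1 < k) (hL : 1 < L) (κ : ℕ → ℕ → ZMod L) :
    (∃ N l : ℕ, 0 < l ∧ ∀ n : ℕ, N ≤ n → gtm k L κ n = gtm k L κ (n + l)) ↔
    (∃ A : ℕ, ∀ s y : ℕ, 1 ≤ s → s ≤ k - 1 →
      κ s (A + y) = κ 1 A * (s : ZMod L) * (k : ZMod L) ^ y) := by
  constructor
  · rintro ⟨N, l, hl, hper⟩
    have hstep : ∀ t n, N ≤ n → gtm k L κ n = gtm k L κ (n + t * l) := by
      intro t
      induction t with
      | zero => simp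
      | succ t ih =>
        intro n hn
        rw [ih n hn, show n + (t + 1) * l = (n + t * l) + l by ring]
        exact hper (n + t * l) (by omega)
    have heq : ∀ n n', N ≤ n → N ≤ n' → n ≡ n' [MOD l] →
        gtm k L κ n = gtm k L κ n' := by
      intro n n' hn hn' hmod
      rcases le_total n n' with h | h
      · obtain ⟨t, ht⟩ := (Nat.modEq_iff_dvd' h).mp hmod
        rw [hstep t n hn, show n + t * l = n' by rw [Nat.mul_comm]; omega]
      · obtain ⟨t, ht⟩ := (Nat.modEq_iff_dvd' h).mp hmod.symm
        rw [hstep t n' hn', show n' + t * l = n by rw [Nat.mul_comm]; omega]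
    have hij : ∃ i j : ℕ, i < j ∧ k ^ i ≡ k ^ j [MOD l] := by
      obtain ⟨i0, -, j0, -, hne, hfe⟩ :=
        Finset.exists_ne_map_eq_of_card_lt_of_maps_to
          (s := Finset.range (l + 1)) (t := Finset.range l)
          (by simp)
          (fun w _ => Finset.mem_range.mpr (Nat.mod_lt _ hl)) (f := fun w => k ^ w % l)
      rcases lt_or_gt_of_ne hne with h | h
      · exact ⟨i0, j0, h, hfe⟩
      · exact ⟨j0, i0, h, hfe.symm⟩
    obtain ⟨i0, j0, hijlt, hcong⟩ := hij
    set p := j0 - i0 with hpdef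
    have hp : 0 < p := by omega
    have hpow : ∀ w, i0 ≤ w → k ^ (w + p) ≡ k ^ w [MOD l] := by
      intro w hw
      obtain ⟨d, rfl⟩ := Nat.exists_eq_add_of_le hw
      have h1 : i0 + d + p = j0 + d := by omega
      rw [h1, pow_add, pow_add]
      exact Nat.ModEq.mul_right _ hcong.symm
    have hpowt : ∀ w, i0 ≤ w → ∀ t, k ^ (w + t * p) ≡ k ^ w [MOD l] := by
      intro w hw t
      induction t with
      | zero => simpa using Nat.ModEq.refl (k ^ w)
      | succ t ih =>
        have h1 : w + (t + 1) * p = (w + t * p) + p := by ring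
        rw [h1]
        exact (hpow _ (by omega)).trans ih
    have hsum_modeq : ∀ W, i0 ≤ W → ∀ r,
        (∑ i ∈ Finset.range r, k ^ (W + i * p)) ≡ r * k ^ W [MOD l] := by
      intro W hW r
      induction r with
      | zero => simpa using Nat.ModEq.refl 0
      | succ r ih =>
        rw [Finset.sum_range_succ, show (r + 1) * k ^ W = r * k ^ W + k ^ W by ring]
        exact ih.add (hpowt W hW r)
    set u := max i0 N with hudef
    have hNpow : ∀ W, u ≤ W → N ≤ k ^ W := by
      intro W hW
      have h1 : W < 2 ^ W := Nat.lt_two_pow_self (n := W)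
      have h2 : 2 ^ W ≤ k ^ W := Nat.pow_le_pow_left hk W
      omega
    have hsum_ge : ∀ W r, 0 < r → k ^ W ≤ ∑ i ∈ Finset.range r, k ^ (W + i * p) := by
      intro W r hr
      calc k ^ W = k ^ (W + 0 * p) := by ring_nf
      _ ≤ _ := Finset.single_le_sum (f := fun i => k ^ (W + i * p))
        (fun i _ => Nat.zero_le _) (Finset.mem_range.mpr hr)
    have R1 : ∀ W, u ≤ W → ∀ t, κ 1 (W + t * p) = κ 1 W := by
      intro W hW t
      have h1 : gtm k L κ (k ^ (W + t * p)) = κ 1 (W + t * p) := by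
        simpa using gtm_single κ hk (s := 1) (W := W + t * p) one_pos hk
      have h2 : gtm k L κ (k ^ W) = κ 1 W := by
        simpa using gtm_single κ hk (s := 1) (W := W) one_pos hk
      have := heq (k ^ (W + t * p)) (k ^ W) (hNpow _ (by omega)) (hNpow _ hW)
        (hpowt W (le_trans (le_max_left _ _) hW) t)
      rw [h1, h2] at this; exact this
    have R2 : ∀ W, u ≤ W → ∀ s, 1 ≤ s → s < k → κ s W = (s : ZMod L) * κ 1 W := by
      intro W hW s hs1 hs2
      have hA : gtm k L κ (s * k ^ W) = κ s W := gtm_single κ hk hs1 hs2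
      have hB := gtm_sum_pow κ hk hp s W
      have hBe : (∑ i ∈ Finset.range s, κ 1 (W + i * p)) = (s : ZMod L) * κ 1 W := by
        rw [Finset.sum_congr rfl (fun i _ => R1 W hW i)]
        simp [nsmul_eq_mul]
      have hc := hsum_modeq W (le_trans (le_max_left _ _) hW) s
      have := heq (s * k ^ W) (∑ i ∈ Finset.range s, k ^ (W + i * p))
        (le_trans (hNpow W hW) (Nat.le_mul_of_pos_left _ hs1))
        (le_trans (hNpow W hW) (hsum_ge W s hs1)) hc.symm
      rw [hA, hB, hBe] at this; exact this
    have R3 : ∀ W, u ≤ W → κ 1 (W + 1) = (k : ZMod L) * κ 1 W := by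
      intro W hW
      have hA : gtm k L κ (k ^ (W + 1)) = κ 1 (W + 1) := by
        simpa using gtm_single κ hk (s := 1) (W := W + 1) one_pos hk
      have hB := gtm_sum_pow κ hk hp k W
      have hBe : (∑ i ∈ Finset.range k, κ 1 (W + i * p)) = (k : ZMod L) * κ 1 W := by
        rw [Finset.sum_congr rfl (fun i _ => R1 W hW i)]
        simp [nsmul_eq_mul]
      have hc : (∑ i ∈ Finset.range k, k ^ (W + i * p)) ≡ k ^ (W + 1) [MOD l] := by
        have := hsum_modeq W (le_trans (le_max_left _ _) hW) k
        rwa [show k * k ^ W = k ^ (W + 1) by ring] at this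
      have := heq (k ^ (W + 1)) (∑ i ∈ Finset.range k, k ^ (W + i * p))
        (hNpow _ (by omega))
        (le_trans (hNpow W hW) (hsum_ge W k (by omega))) hc.symm
      rw [hA, hB, hBe] at this; exact this
    refine ⟨u, ?_⟩
    intro s y hs1 hs2
    have hky : κ 1 (u + y) = (k : ZMod L) ^ y * κ 1 u := by
      induction y with
      | zero => simp
      | succ y ihy =>
        rw [show u + (y + 1) = (u + y) + 1 by ring, R3 (u + y) (by omega), ihy]
        ring
    rw [R2 (u + y) (by omega) s hs1 (by omega), hky]
    ring
  · rintro ⟨A, hκ⟩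
    refine ⟨0, L * k ^ A, by positivity, ?_⟩
    intro n _
    have hm : n % k ^ A < k ^ A := Nat.mod_lt _ (pow_pos (by omega) A)
    have h1 : gtm k L κ n = gtm k L κ (n % k ^ A) + κ 1 A * ((n / k ^ A : ℕ) : ZMod L) := by
      conv_lhs => rw [show n = n % k ^ A + (n / k ^ A) * k ^ A from (Nat.mod_add_div' n _).symm]
      exact gtm_high κ hk A hκ (n / k ^ A) (n % k ^ A) hm
    have h2 : gtm k L κ (n + L * k ^ A) =
        gtm k L κ (n % k ^ A) + κ 1 A * ((n / k ^ A + L : ℕ) : ZMod L) := by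
      have hsplit : n + L * k ^ A = n % k ^ A + (n / k ^ A + L) * k ^ A := by
        rw [add_mul]
        have := Nat.mod_add_div' n (k ^ A)
        omega
      rw [hsplit]
      exact gtm_high κ hk A hκ (n / k ^ A + L) (n % k ^ A) hm
    rw [h1, h2]
    push_cast
    rw [ZMod.natCast_self]
    ring
end

section
/- Let k, L > 1, κ : {1,…,k-1} × ℕ → ℤ/L, and a(n) the generalized Thue–Morse sequence of type (L,k,κ). If (a(n))_{n≥0} is not ultimately periodic, then for every N ≥ 0 and l > 0, the equally spaced subsequence (a(N + t·l))_{t≥0} is not ultimately periodic. -/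
open scoped BigOperators

namespace Stmt12Aux

/-- Partial digit sum with position offset `F`, over `W` digit positions. -/
def psum (k L : ℕ) (κ : ℕ → ℕ → ZMod L) (F W n : ℕ) : ZMod L :=
  ∑ y ∈ Finset.range W, if n / k ^ y % k ≠ 0 then κ (n / k ^ y % k) (y + F) else 0

lemma dig_getD {k : ℕ} (hk : 1 < k) : ∀ n i, (Nat.digits k n).getD i 0 = n / k ^ i % k := by
  intro n
  induction n using Nat.strong_induction_on with
  | _ n ih =>
    intro i
    rcases Nat.eq_zero_or_pos n with rfl | hn
    · simp
    · rw [Nat.digits_def' hk hn]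
      cases i with
      | zero => simp
      | succ i =>
        have h := ih (n / k) (Nat.div_lt_self hn (by omega)) i
        have h2 : n / k / k ^ i = n / k ^ (i + 1) := by
          rw [Nat.div_div_eq_div_mul, ← pow_succ']
        rw [List.getD_cons_succ, h, h2]

lemma len_le {k W n : ℕ} (hk : 1 < k) (hn : n < k ^ W) : (Nat.digits k n).length ≤ W := by
  by_contra h
  push_neg at h
  have h1 : k ^ (W + 1) ≤ k ^ (Nat.digits k n).length := Nat.pow_le_pow_right (by omega) h
  have h2 : n ≠ 0 := by rintro rfl; simp at h
  have h3 := Nat.base_pow_length_digits_le k n hk h2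
  have h4 : k * k ^ W ≤ k * n := by
    calc k * k ^ W = k ^ (W + 1) := by ring
    _ ≤ k ^ (Nat.digits k n).length := h1
    _ ≤ k * n := h3
  have : k ^ W ≤ n := Nat.le_of_mul_le_mul_left h4 (by omega)
  omega

lemma psum_eq {k L : ℕ} (κ : ℕ → ℕ → ZMod L) (hk : 1 < k) (F : ℕ) {W W' n : ℕ}
    (h : W ≤ W') (hn : n < k ^ W) : psum k L κ F W n = psum k L κ F W' n := by
  unfold psum
  refine Finset.sum_subset (Finset.range_subset_range.mpr h) ?_
  intro y _ hy
  rw [Finset.mem_range, not_lt] at hy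
  have hlen : n < k ^ y := lt_of_lt_of_le hn (Nat.pow_le_pow_right (by omega) hy)
  rw [Nat.div_eq_of_lt hlen]
  simp


lemma gtm_eq_psum {k L : ℕ} (κ : ℕ → ℕ → ZMod L) (hk : 1 < k) {W n : ℕ} (hn : n < k ^ W) :
    gtm k L κ n = psum k L κ 0 W n := by
  have hlen : (Nat.digits k n).length ≤ W := len_le hk hn
  have h0 : gtm k L κ n = psum k L κ 0 (Nat.digits k n).length n := by
    unfold gtm psum
    refine Finset.sum_congr rfl fun y _ => ?_
    rw [dig_getD hk n y]
    simp
  rw [h0]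
  exact psum_eq κ hk 0 hlen (Nat.lt_base_pow_length_digits hk)

/-- The shifted tail sum. -/
def tl (k L : ℕ) (κ : ℕ → ℕ → ZMod L) (F q : ℕ) : ZMod L :=
  psum k L κ F (Nat.digits k q).length q

lemma tl_eq {k L : ℕ} (κ : ℕ → ℕ → ZMod L) (hk : 1 < k) (F : ℕ) {W q : ℕ} (hq : q < k ^ W) :
    tl k L κ F q = psum k L κ F W q :=
  psum_eq κ hk F (len_le hk hq) (Nat.lt_base_pow_length_digits hk)

lemma split {k L : ℕ} (κ : ℕ → ℕ → ZMod L) (hk : 1 < k) {F s : ℕ} (q : ℕ) (hs : s < k ^ F) :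
    gtm k L κ (s + k ^ F * q) = gtm k L κ s + tl k L κ F q := by
  have hq : q < k ^ (Nat.digits k q).length := Nat.lt_base_pow_length_digits hk
  set W := (Nat.digits k q).length with hW
  have hbig : s + k ^ F * q < k ^ (F + W) := by
    calc s + k ^ F * q < k ^ F + k ^ F * q := by omega
    _ = k ^ F * (q + 1) := by ring
    _ ≤ k ^ F * k ^ W := Nat.mul_le_mul_left _ (by omega)
    _ = k ^ (F + W) := by rw [← pow_add]
  rw [gtm_eq_psum κ hk hbig, gtm_eq_psum κ hk hs, tl_eq κ hk F hq]
  unfold psum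
  rw [Finset.sum_range_add]
  congr 1
  · refine Finset.sum_congr rfl fun y hy => ?_
    rw [Finset.mem_range] at hy
    have key : (s + k ^ F * q) / k ^ y % k = s / k ^ y % k := by
      have h1 : k ^ F * q = k ^ (F - y - 1) * q * k * k ^ y := by
        have hF : F = F - y - 1 + 1 + y := by omega
        conv_lhs => rw [hF]
        rw [pow_add, pow_add, pow_one]
        ring
      rw [h1, Nat.add_mul_div_right _ _ (pow_pos (by omega) y),
        Nat.add_mul_mod_self_right]
    rw [key]
  · refine Finset.sum_congr rfl fun y _ => ?_
    have key : (s + k ^ F * q) / k ^ (F + y) % k = q / k ^ y % k := by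
      have h1 : (s + k ^ F * q) / k ^ F = q := by
        rw [Nat.add_mul_div_left _ _ (pow_pos (by omega) F),
          Nat.div_eq_of_lt hs, zero_add]
      rw [pow_add, ← Nat.div_div_eq_div_mul, h1]
    rw [key]
    have : F + y + 0 = y + F := by omega
    rw [this]


lemma dvd_pow_self_of_dvd_pow {k : ℕ} : ∀ d, 0 < d → ∀ F, d ∣ k ^ F → d ∣ k ^ d := by
  intro d
  induction d using Nat.strong_induction_on with
  | _ d ih =>
    intro hd F hdvd
    rcases eq_or_ne d 1 with rfl | h1
    · simp
    · obtain ⟨p, hp, hpd⟩ := Nat.exists_prime_and_dvd h1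
      have hpk : p ∣ k := hp.dvd_of_dvd_pow (hpd.trans hdvd)
      obtain ⟨d', rfl⟩ := hpd
      have hp2 : 2 ≤ p := hp.two_le
      have hd' : 0 < d' := by
        rcases Nat.eq_zero_or_pos d' with rfl | h
        · omega
        · exact h
      have hlt : d' < p * d' := by
        calc d' = 1 * d' := (one_mul d').symm
        _ < p * d' := (Nat.mul_lt_mul_right hd').2 (by omega)
      have hdF : d' ∣ k ^ F := (dvd_mul_left d' p).trans hdvd
      have ihd := ih d' hlt hd' F hdF
      have hmul : p * d' ∣ k * k ^ d' := mul_dvd_mul hpk ihd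
      rw [← pow_succ'] at hmul
      exact hmul.trans (pow_dvd_pow k hlt)

lemma gcd_pow_stab {k l : ℕ} (hk : 1 < k) (hl : 0 < l) {F : ℕ} (hF : l ≤ F) :
    Nat.gcd (k ^ F) l = Nat.gcd (k ^ l) l := by
  apply Nat.dvd_antisymm
  · apply Nat.dvd_gcd _ (Nat.gcd_dvd_right _ _)
    have hd := Nat.gcd_dvd_left (k ^ F) l
    have hdl := Nat.gcd_dvd_right (k ^ F) l
    have hpos : 0 < Nat.gcd (k ^ F) l := Nat.gcd_pos_of_pos_right _ hl
    exact (dvd_pow_self_of_dvd_pow _ hpos F hd).trans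
      (pow_dvd_pow k (Nat.le_of_dvd hl hdl))
  · exact Nat.dvd_gcd ((Nat.gcd_dvd_left (k ^ l) l).trans (pow_dvd_pow k hF))
      (Nat.gcd_dvd_right _ _)

lemma extend {k L : ℕ} (κ : ℕ → ℕ → ZMod L) (hk : 1 < k)
    {N l M j : ℕ} (hl : 0 < l) (hj : 0 < j)
    (hper : ∀ t : ℕ, M ≤ t → gtm k L κ (N + t * l) = gtm k L κ (N + (t + j) * l))
    {m : ℕ} (hm : m ≡ N [MOD Nat.gcd (k ^ l) l]) :
    gtm k L κ m = gtm k L κ (m + j * l) := by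
  set g := Nat.gcd (k ^ l) l with hg
  set F := l + (m + j * l) with hF
  have hFl : l ≤ F := by omega
  have hkF : 0 < k ^ F := pow_pos (by omega) _
  have hmjl : m + j * l < k ^ F := lt_of_le_of_lt (by omega) (Nat.lt_pow_self (n := F) hk)
  have hgF : Nat.gcd (k ^ F) l = g := gcd_pow_stab hk hl hFl
  have hbez : (g : ℤ) = (k ^ F : ℕ) * Nat.gcdA (k ^ F) l + l * Nat.gcdB (k ^ F) l := by
    rw [← hgF]
    exact Nat.gcd_eq_gcd_ab _ _
  have hgdvd : (g : ℤ) ∣ (N : ℤ) - m := hm.dvd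
  set A : ℤ := (N : ℤ) - m with hA
  obtain ⟨D, hD⟩ := hgdvd
  set c' : ℤ := Nat.gcdA (k ^ F) l * D with hc'
  have hkey : A - ((k ^ F : ℕ) : ℤ) * c' = l * (Nat.gcdB (k ^ F) l * D) := by
    rw [hD, hc']
    linear_combination D * hbez
  have hlne : ((l : ℤ)) ≠ 0 := by exact_mod_cast hl.ne'
  set T : ℕ := N + M * l + 1 with hT
  set c : ℕ := (c' % l).toNat + l * T with hc
  have hcZ : (c : ℤ) = c' + l * ((T : ℤ) - c' / l) := by
    have h1 : ((c' % l).toNat : ℤ) = c' % l := Int.toNat_of_nonneg (Int.emod_nonneg c' hlne)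
    rw [hc]
    push_cast
    rw [h1, Int.emod_def]
    ring
  have hdvdfinal : (l : ℤ) ∣ ((m : ℤ) + c * (k ^ F : ℕ)) - N := by
    refine ⟨- (Nat.gcdB (k ^ F) l * D) + ((T : ℤ) - c' / l) * (k ^ F : ℕ), ?_⟩
    have hN : (N : ℤ) = m + A := by rw [hA]; ring
    rw [hN, hcZ]
    linear_combination -hkey
  have hcge : N + M * l + 1 ≤ c := by
    have h1 : T ≤ l * T := Nat.le_mul_of_pos_left T hl
    omega
  have hge : N + M * l + 1 ≤ m + c * k ^ F := by
    have h2 : c ≤ c * k ^ F := Nat.le_mul_of_pos_right c hkF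
    omega
  have hdvdN : l ∣ m + c * k ^ F - N := by
    have h3 : ((m + c * k ^ F - N : ℕ) : ℤ) = ((m : ℤ) + c * (k ^ F : ℕ)) - N := by
      push_cast [Nat.cast_sub (show N ≤ m + c * k ^ F by omega)]
      ring
    rw [← Int.natCast_dvd_natCast, h3]
    exact hdvdfinal
  obtain ⟨t, ht⟩ := hdvdN
  have heq : m + c * k ^ F = N + t * l := by
    have := Nat.mul_comm l t
    omega
  have hMt : M ≤ t := by
    have h4 : M * l < t * l := by omega
    exact (Nat.lt_of_mul_lt_mul_right h4).le
  have h := hper t hMt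
  rw [← heq] at h
  have heq2 : N + (t + j) * l = m + j * l + k ^ F * c := by
    have h5 : (t + j) * l = t * l + j * l := by ring
    have h6 : k ^ F * c = c * k ^ F := by ring
    omega
  rw [heq2] at h
  have hsplit1 : gtm k L κ (m + k ^ F * c) = gtm k L κ m + tl k L κ F c :=
    split κ hk c (by omega)
  have hsplit2 : gtm k L κ (m + j * l + k ^ F * c) =
      gtm k L κ (m + j * l) + tl k L κ F c := split κ hk c hmjl
  rw [show m + c * k ^ F = m + k ^ F * c by ring, hsplit1, hsplit2] at h
  exact add_right_cancel h

end Stmt12Aux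

open Stmt12Aux in
/-- if the generalized Thue–Morse sequence is not ultimately periodic,
then none of its equally spaced subsequences is ultimately periodic. -/
theorem stmt_12 (k L : ℕ) (hk : 1 < k) (hL : 1 < L) (κ : ℕ → ℕ → ZMod L)
    (hnp : ¬ ∃ N l : ℕ, 0 < l ∧ ∀ n : ℕ, N ≤ n → gtm k L κ n = gtm k L κ (n + l)) :
    ∀ N l : ℕ, 0 < l →
      ¬ ∃ M j : ℕ, 0 < j ∧ ∀ t : ℕ, M ≤ t →
        gtm k L κ (N + t * l) = gtm k L κ (N + (t + j) * l) := by
  intro N l hl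
  rintro ⟨M, j, hj, hper⟩
  apply hnp
  set g := Nat.gcd (k ^ l) l with hg
  have hgl : g ∣ l := Nat.gcd_dvd_right _ _
  have hgpos : 0 < g := Nat.gcd_pos_of_pos_right _ hl
  have hgle : g ≤ l := Nat.le_of_dvd hl hgl
  set E := l + j * l with hE
  have hEl : l ≤ E := by omega
  have hgE : g ∣ k ^ E := by
    rw [hg, ← gcd_pow_stab hk hl hEl]
    exact Nat.gcd_dvd_left _ _
  have hjlE : j * l < k ^ E := lt_of_le_of_lt (by omega) (Nat.lt_pow_self (n := E) hk)
  have hkEpos : 0 < k ^ E := by positivity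
  have hjl : 0 < j * l := by positivity
  have hgkE : g ≤ k ^ E := Nat.le_of_dvd hkEpos hgE
  set s := k ^ E - g + N % g with hs
  have hsmod : s ≡ N [MOD g] := by
    have h1 : g ∣ k ^ E - g := Nat.dvd_sub hgE dvd_rfl
    calc s ≡ 0 + N % g [MOD g] :=
          Nat.ModEq.add_right _ (Nat.modEq_zero_iff_dvd.mpr h1)
    _ = N % g := zero_add _
    _ ≡ N [MOD g] := Nat.mod_modEq N g
  have hsub : k ^ E - g + g = k ^ E := Nat.sub_add_cancel hgkE
  have hNg : N % g < g := Nat.mod_lt N hgpos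
  have hlle : l ≤ j * l := Nat.le_mul_of_pos_left l hj
  have hslt : s < k ^ E := by omega
  have hs2 : k ^ E ≤ s + j * l := by omega
  set s' := s + j * l - k ^ E with hs'
  have hs'lt : s' < k ^ E := by omega
  set cc : ZMod L := gtm k L κ s - gtm k L κ s' with hcc
  have hstep : ∀ q : ℕ, tl k L κ E (q + 1) = tl k L κ E q + cc := by
    intro q
    have hmod : s + k ^ E * q ≡ N [MOD g] := by
      calc s + k ^ E * q ≡ s + 0 [MOD g] :=
            Nat.ModEq.add_left _ (Nat.modEq_zero_iff_dvd.mpr (hgE.mul_right q))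
      _ = s := by omega
      _ ≡ N [MOD g] := hsmod
    have h := extend κ hk hl hj hper hmod
    have heq : s + k ^ E * q + j * l = s' + k ^ E * (q + 1) := by
      have h5 : k ^ E * (q + 1) = k ^ E * q + k ^ E := by ring
      omega
    rw [heq, split κ hk q hslt, split κ hk (q + 1) hs'lt] at h
    have h6 : gtm k L κ s' + tl k L κ E (q + 1) =
        gtm k L κ s' + (tl k L κ E q + cc) := by
      rw [← h, hcc]
      ring
    exact add_left_cancel h6
  have hiter : ∀ r q : ℕ, tl k L κ E (q + r) = tl k L κ E q + r • cc := by
    intro r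
    induction r with
    | zero => intro q; simp
    | succ r ih =>
      intro q
      have h7 : q + (r + 1) = q + r + 1 := by omega
      rw [h7, hstep (q + r), ih q, succ_nsmul]
      ring
  refine ⟨0, k ^ E * L, by positivity, fun n _ => ?_⟩
  have hLcc : L • cc = 0 := by
    rw [nsmul_eq_mul, ZMod.natCast_self, zero_mul]
  have hn1 : n = n % k ^ E + k ^ E * (n / k ^ E) := (Nat.mod_add_div n (k ^ E)).symm
  have hn2 : n + k ^ E * L = n % k ^ E + k ^ E * (n / k ^ E + L) := by
    have h8 := Nat.mod_add_div n (k ^ E)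
    have h9 : k ^ E * (n / k ^ E + L) = k ^ E * (n / k ^ E) + k ^ E * L := by ring
    omega
  have hmlt : n % k ^ E < k ^ E := Nat.mod_lt n hkEpos
  rw [hn2, split κ hk (n / k ^ E + L) hmlt]
  conv_lhs => rw [hn1, split κ hk (n / k ^ E) hmlt]
  rw [hiter L (n / k ^ E), hLcc, add_zero]
end

section
/- Let k, L > 1 and κ : {1,…,k-1} → ℤ/L (position-independent). Define a(n) ≡ Σ_{s=1}^{k-1} κ(s)·e_s(n) (mod L), where e_s(n) counts occurrences of digit s in base k. Then (a(n))_{n≥0} is ultimately periodic if and only if s·κ(1) ≡ κ(s) (mod L) for all 1 ≤ s ≤ k-1 and κ(k-1) ≡ 0 (mod L). -/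
open scoped BigOperators

private def Fd (k L : ℕ) (κ : ℕ → ZMod L) (n : ℕ) : ZMod L :=
  ∑ s ∈ Finset.Icc 1 (k - 1), κ s * ((Nat.digits k n).count s : ZMod L)

private lemma Fd_zero (k L : ℕ) (κ : ℕ → ZMod L) : Fd k L κ 0 = 0 := by
  simp [Fd]

private lemma count_digits_add_pow_mul {k : ℕ} (hk : 1 < k) {v : ℕ} (m u s : ℕ)
    (hv : v < k ^ m) (hs : s ≠ 0) :
    (Nat.digits k (v + k ^ m * u)).count s
      = (Nat.digits k v).count s + (Nat.digits k u).count s := by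
  rcases Nat.eq_zero_or_pos u with rfl | hu
  · simp
  have hlen : (Nat.digits k v).length ≤ m := by
    rcases Nat.eq_zero_or_pos v with rfl | hv0
    · simp
    · rw [Nat.digits_len k v hk hv0.ne']
      exact Nat.succ_le_of_lt (Nat.log_lt_of_lt_pow hv0.ne' hv)
  have h := Nat.digits_append_zeroes_append_digits (b := k)
    (k := m - (Nat.digits k v).length) (m := u) (n := v) hk hu
  rw [Nat.add_sub_cancel' hlen] at h
  rw [← h]
  simp [List.count_append, List.count_replicate, hs, Ne.symm hs]

private lemma Fd_add {k L : ℕ} (hk : 1 < k) (κ : ℕ → ZMod L) {v : ℕ} (m u : ℕ)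
    (hv : v < k ^ m) :
    Fd k L κ (v + k ^ m * u) = Fd k L κ v + Fd k L κ u := by
  unfold Fd
  rw [← Finset.sum_add_distrib]
  refine Finset.sum_congr rfl fun s hs => ?_
  have hs1 : s ≠ 0 := by
    have := (Finset.mem_Icc.mp hs).1; omega
  rw [count_digits_add_pow_mul hk m u s hv hs1]
  push_cast
  ring

private lemma Fd_digit {k L : ℕ} (hk : 1 < k) (κ : ℕ → ZMod L) {d : ℕ}
    (hd1 : 1 ≤ d) (hd2 : d ≤ k - 1) :
    Fd k L κ d = κ d := by
  have hdk : d < k := by omega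
  have hdig : Nat.digits k d = [d] := by
    rw [Nat.digits_def' hk (by omega), Nat.mod_eq_of_lt hdk, Nat.div_eq_of_lt hdk]
    simp
  unfold Fd
  rw [hdig, Finset.sum_eq_single d]
  · simp
  · intro b hb hbd
    simp [List.count_singleton', hbd, Ne.symm hbd]
  · intro h; exact absurd (Finset.mem_Icc.mpr ⟨hd1, hd2⟩) h

private lemma Fd_pow_mul {k L : ℕ} (hk : 1 < k) (κ : ℕ → ZMod L) (j u : ℕ) :
    Fd k L κ (k ^ j * u) = Fd k L κ u := by
  have h0 : (0 : ℕ) < k ^ j := pow_pos (by omega) j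
  have := Fd_add hk κ (v := 0) j u h0
  simpa [Fd_zero] using this

private lemma sum_count_eq {k : ℕ} (hk : 1 < k) (lst : List ℕ) (h : ∀ x ∈ lst, x < k) :
    (∑ s ∈ Finset.Icc 1 (k - 1), s * lst.count s) = lst.sum := by
  induction lst with
  | nil => simp
  | cons d t ih =>
    have hd : d < k := h d (by simp)
    have ht : ∀ x ∈ t, x < k := fun x hx => h x (by simp [hx])
    simp only [List.count_cons, beq_iff_eq, List.sum_cons]
    have expand : (∑ s ∈ Finset.Icc 1 (k - 1), s * (t.count s + if d = s then 1 else 0))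
        = (∑ s ∈ Finset.Icc 1 (k - 1), s * t.count s)
          + (∑ s ∈ Finset.Icc 1 (k - 1), if d = s then s else 0) := by
      rw [← Finset.sum_add_distrib]
      refine Finset.sum_congr rfl fun s _ => ?_
      rw [Nat.mul_add]
      congr 1
      by_cases hsd : d = s <;> simp [hsd]
    rw [expand, ih ht, Finset.sum_ite_eq (Finset.Icc 1 (k - 1)) d (fun s => s)]
    rcases Nat.eq_zero_or_pos d with rfl | hd0
    · simp
    · rw [if_pos (Finset.mem_Icc.mpr ⟨hd0, by omega⟩)]
      omega

/-- with position-independent weights κ : {1,…,k-1} → ℤ/L and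
a(n) = Σ_{s=1}^{k-1} κ(s)·e_s(n) (mod L), where e_s(n) counts occurrences of the
digit s in base k, the sequence a is ultimately periodic iff s·κ(1) ≡ κ(s) (mod L)
for all 1 ≤ s ≤ k-1 and κ(k-1) ≡ 0 (mod L). -/
theorem stmt_13 (k L : ℕ) (hk : 1 < k) (hL : 1 < L) (κ : ℕ → ZMod L) :
    (∃ N l : ℕ, 0 < l ∧ ∀ n : ℕ, N ≤ n →
      (∑ s ∈ Finset.Icc 1 (k - 1), κ s * ((Nat.digits k n).count s : ZMod L)) =
      (∑ s ∈ Finset.Icc 1 (k - 1), κ s * ((Nat.digits k (n + l)).count s : ZMod L))) ↔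
    ((∀ s : ℕ, 1 ≤ s → s ≤ k - 1 → (s : ZMod L) * κ 1 = κ s) ∧ κ (k - 1) = 0) := by
  change (∃ N l : ℕ, 0 < l ∧ ∀ n : ℕ, N ≤ n → Fd k L κ n = Fd k L κ (n + l)) ↔ _
  constructor
  · rintro ⟨N, l, hl, hper⟩
    set m := N + l + 1 with hm
    have hkm : N + l < k ^ m := lt_trans (by omega) (Nat.lt_pow_self hk : m < k ^ m)
    set v := k ^ m - l with hvdef
    have hv : v + l = k ^ m := by omega
    have hNv : N ≤ v := by omega
    have hvlt : v < k ^ m := by omega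
    have hFd1 : Fd k L κ 1 = κ 1 := Fd_digit hk κ le_rfl (by omega)
    -- Fd v = κ 1
    have e1 : Fd k L κ v = κ 1 := by
      have hp := hper v hNv
      rw [hv] at hp
      have : Fd k L κ (k ^ m) = κ 1 := by
        have := Fd_pow_mul hk κ m 1
        rwa [mul_one, hFd1] at this
      rw [hp, this]
    -- step relation
    have step : ∀ d : ℕ, 1 ≤ d → d ≤ k - 1 → Fd k L κ (d + 1) = κ 1 + κ d := by
      intro d h1 h2
      have hn : N ≤ v + k ^ m * d := le_trans hNv (Nat.le_add_right _ _)
      have hp := hper (v + k ^ m * d) hn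
      have hrw : v + k ^ m * d + l = k ^ m * (d + 1) := by
        calc v + k ^ m * d + l = (v + l) + k ^ m * d := by ring
          _ = k ^ m + k ^ m * d := by rw [hv]
          _ = k ^ m * (d + 1) := by ring
      rw [hrw, Fd_add hk κ m d hvlt, Fd_digit hk κ h1 h2, e1, Fd_pow_mul hk κ m (d + 1)] at hp
      exact hp.symm
    have hFk : Fd k L κ k = κ 1 := by
      have := Fd_pow_mul hk κ 1 1
      rw [pow_one, mul_one] at this
      rw [this, hFd1]
    have hlast : κ (k - 1) = 0 := by
      have h := step (k - 1) (by omega) le_rfl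
      rw [show k - 1 + 1 = k by omega, hFk] at h
      exact (left_eq_add.mp h)
    refine ⟨?_, hlast⟩
    intro s
    induction s with
    | zero => intro h1 _; omega
    | succ n ih =>
      intro _ h2
      rcases Nat.eq_zero_or_pos n with rfl | hn
      · simp
      · have hstep := step n hn (by omega)
        rw [Fd_digit hk κ (by omega) h2] at hstep
        rw [hstep, ← ih hn (by omega)]
        push_cast
        ring
  · rintro ⟨hκ, hk1⟩
    have hk1' : ((k - 1 : ℕ) : ZMod L) * κ 1 = 0 := by
      rw [hκ (k - 1) (by omega) le_rfl, hk1]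
    have hmodL : ∀ a : ℕ, κ 1 * (a : ZMod L) = κ 1 * ((a % (k - 1) : ℕ) : ZMod L) := by
      intro a
      conv_lhs => rw [← Nat.div_add_mod a (k - 1)]
      push_cast
      rw [mul_add]
      have : κ 1 * (((k - 1 : ℕ) : ZMod L) * ((a / (k - 1) : ℕ) : ZMod L)) = 0 := by
        rw [← mul_assoc, mul_comm (κ 1), hk1', zero_mul]
      rw [this, zero_add]
    have hF : ∀ n : ℕ, Fd k L κ n = κ 1 * ((n : ℕ) : ZMod L) := by
      intro n
      have hdl : ∀ x ∈ Nat.digits k n, x < k := fun x hx => Nat.digits_lt_base hk hx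
      have h1 : (∑ s ∈ Finset.Icc 1 (k - 1), s * (Nat.digits k n).count s)
          = (Nat.digits k n).sum := sum_count_eq hk _ hdl
      have h2 : Fd k L κ n
          = κ 1 * (((∑ s ∈ Finset.Icc 1 (k - 1), s * (Nat.digits k n).count s : ℕ)) : ZMod L) := by
        unfold Fd
        push_cast
        rw [Finset.mul_sum]
        refine Finset.sum_congr rfl fun s hs => ?_
        have hmem := Finset.mem_Icc.mp hs
        rw [← hκ s hmem.1 hmem.2]
        ring
      rw [h2, h1]
      -- now κ 1 * digit sum = κ 1 * n via mod (k-1)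
      have hmod : n % (k - 1) = (Nat.digits k n).sum % (k - 1) := by
        rcases Nat.lt_or_ge k 3 with hk2 | hk3
        · have : k = 2 := by omega
          subst this
          simp [Nat.mod_one]
        · have hkm : k % (k - 1) = 1 := by
            have h1 := Nat.add_mod_left (k - 1) 1
            rw [show k - 1 + 1 = k by omega] at h1
            rw [h1]
            exact Nat.mod_eq_of_lt (by omega)
          exact Nat.modEq_digits_sum (k - 1) k hkm n
      rw [hmodL ((Nat.digits k n).sum), hmodL n, hmod]
    refine ⟨0, L, by omega, fun n _ => ?_⟩
    rw [hF n, hF (n + L)]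
    push_cast
    rw [ZMod.natCast_self]
    ring
end

section
/- The Thue–Morse sequence t(n) = (number of 1s in the binary expansion of n) mod 2 is not ultimately periodic, and moreover every equally spaced subsequence (t(N + n·l))_{n≥0} with l > 0 is not ultimately periodic. -/
private def s (n : ℕ) : ℕ := (Nat.digits 2 n).count 1

private lemma s_two_mul (n : ℕ) : s (2 * n) = s n := by
  rcases Nat.eq_zero_or_pos n with h | h
  · simp [h, s]
  · unfold s
    rw [Nat.digits_def' (by norm_num : 1 < 2) (by omega)]
    have h1 : 2 * n % 2 = 0 := by omega
    have h2 : 2 * n / 2 = n := by omega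
    simp [h1, h2]

private lemma s_two_mul_add_one (n : ℕ) : s (2 * n + 1) = s n + 1 := by
  unfold s
  rw [Nat.digits_def' (by norm_num : 1 < 2) (by omega)]
  have h1 : (2 * n + 1) % 2 = 1 := by omega
  have h2 : (2 * n + 1) / 2 = n := by omega
  simp [h1, h2]

private lemma s_pow_mul_add : ∀ (K a b : ℕ), b < 2 ^ K → s (2 ^ K * a + b) = s a + s b := by
  intro K
  induction K with
  | zero =>
    intro a b hb
    interval_cases b
    simp [s]
  | succ K ih =>
    intro a b hb
    have hq : b / 2 < 2 ^ K := by
      have : (2:ℕ) ^ (K+1) = 2 ^ K * 2 := pow_succ 2 K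
      omega
    have hdm : b = 2 * (b / 2) + b % 2 := by omega
    have hkey : 2 ^ (K + 1) * a + b = 2 * (2 ^ K * a + b / 2) + b % 2 := by
      have h2 : 2 ^ (K + 1) * a = 2 * (2 ^ K * a) := by rw [pow_succ]; ring
      omega
    rcases Nat.mod_two_eq_zero_or_one b with hr | hr
    · rw [hkey, hr, add_zero, s_two_mul, ih a (b/2) hq]
      have hb2 : s b = s (b / 2) := by
        conv_lhs => rw [hdm, hr, add_zero, s_two_mul]
      omega
    · rw [hkey, hr, s_two_mul_add_one, ih a (b/2) hq]
      have hb2 : s b = s (b / 2) + 1 := by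
        conv_lhs => rw [hdm, hr, s_two_mul_add_one]
      omega

private lemma s_complement : ∀ (a : ℕ), ∀ x < 2 ^ a, s x + s (2 ^ a - 1 - x) = a := by
  intro a
  induction a with
  | zero =>
    intro x hx
    interval_cases x
    simp [s]
  | succ a ih =>
    intro x hx
    have hpow : (2:ℕ) ^ (a+1) = 2 ^ a * 2 := pow_succ 2 a
    have hq : x / 2 < 2 ^ a := by omega
    have hdm : x = 2 * (x / 2) + x % 2 := by omega
    have h1 : (1:ℕ) ≤ 2 ^ a := Nat.one_le_two_pow
    have hih := ih (x / 2) hq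
    rcases Nat.mod_two_eq_zero_or_one x with hr | hr
    · have hc : 2 ^ (a+1) - 1 - x = 2 * (2 ^ a - 1 - x / 2) + 1 := by omega
      rw [hc, s_two_mul_add_one]
      have hx2 : s x = s (x / 2) := by
        conv_lhs => rw [hdm, hr, add_zero, s_two_mul]
      omega
    · have hc : 2 ^ (a+1) - 1 - x = 2 * (2 ^ a - 1 - x / 2) := by omega
      rw [hc, s_two_mul]
      have hx2 : s x = s (x / 2) + 1 := by
        conv_lhs => rw [hdm, hr, s_two_mul_add_one]
      omega

private lemma s_mul_pred_pow (d a : ℕ) (hd : 0 < d) (hda : d < 2 ^ a) :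
    s (d * (2 ^ a - 1)) = a := by
  have h1 : (1:ℕ) ≤ 2 ^ a := Nat.one_le_two_pow
  have hsplit : d * (2 ^ a - 1) = 2 ^ a * (d - 1) + (2 ^ a - d) := by
    zify [h1, hd, hda.le]
    ring
  rw [hsplit, s_pow_mul_add a (d-1) (2 ^ a - d) (by omega)]
  have hc := s_complement a (d - 1) (by omega)
  have he : 2 ^ a - 1 - (d - 1) = 2 ^ a - d := by omega
  rw [he] at hc
  omega

private lemma key_s14 (N l : ℕ) (hl : 0 < l) :
    ¬ ∃ M j : ℕ, 0 < j ∧ ∀ t : ℕ, M ≤ t →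
        (Nat.digits 2 (N + t * l)).count 1 % 2 =
          (Nat.digits 2 (N + (t + j) * l)).count 1 % 2 := by
  rintro ⟨M, j, hj, H⟩
  have H' : ∀ t : ℕ, M ≤ t → s (N + t * l) % 2 = s (N + (t + j) * l) % 2 := H
  have step1 : ∀ k t : ℕ, M ≤ t → s (N + t * l) % 2 = s (N + (t + k * j) * l) % 2 := by
    intro k
    induction k with
    | zero => intro t ht; simp
    | succ k ih =>
      intro t ht
      have h1 := ih t ht
      have h2 := H' (t + k * j) (le_trans ht (Nat.le_add_right _ _))
      have he : t + k * j + j = t + (k + 1) * j := by ring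
      rw [he] at h2
      omega
  set a0 := N + M * l with ha0
  set d := j * l with hd
  have hdpos : 0 < d := Nat.mul_pos hj hl
  have step2 : ∀ k : ℕ, s a0 % 2 = s (a0 + k * d) % 2 := by
    intro k
    have h := step1 k M le_rfl
    have he : N + (M + k * j) * l = a0 + k * d := by rw [ha0, hd]; ring
    rw [he] at h
    exact h
  have step3 : ∀ u : ℕ, s (u * d) % 2 = 0 := by
    intro u
    have h := step2 (2 ^ a0 * u)
    have he : a0 + 2 ^ a0 * u * d = 2 ^ a0 * (u * d) + a0 := by ring
    rw [he, s_pow_mul_add a0 (u * d) a0 (Nat.lt_two_pow_self (n := a0))] at h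
    omega
  have hlt : d < 2 ^ (2 * d + 1) := lt_of_le_of_lt (by omega) (Nat.lt_two_pow_self (n := 2 * d + 1))
  have h3 := step3 (2 ^ (2 * d + 1) - 1)
  rw [mul_comm, s_mul_pred_pow d (2 * d + 1) hdpos hlt] at h3
  omega

/-- the Thue–Morse sequence t(n) = s₂(n) mod 2 is not ultimately
periodic, and every equally spaced subsequence (t(N + n·l))ₙ with l > 0 is not
ultimately periodic either. -/
theorem stmt_14 :
    (¬ ∃ N l : ℕ, 0 < l ∧ ∀ n : ℕ, N ≤ n →
      (Nat.digits 2 n).count 1 % 2 = (Nat.digits 2 (n + l)).count 1 % 2) ∧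
    (∀ N l : ℕ, 0 < l →
      ¬ ∃ M j : ℕ, 0 < j ∧ ∀ t : ℕ, M ≤ t →
        (Nat.digits 2 (N + t * l)).count 1 % 2 =
          (Nat.digits 2 (N + (t + j) * l)).count 1 % 2) := by
  constructor
  · rintro ⟨N, l, hl, H⟩
    apply key_s14 0 1 one_pos
    refine ⟨N, l, hl, fun t ht => ?_⟩
    have h := H t ht
    simpa using h
  · exact key_s14
end

section
/- Let k, L > 1 and κ : {1,…,k-1} × ℕ → ℤ/L, and let a be the generalized Thue–Morse sequence of type (L,k,κ). Then a is a k-automatic sequence if and only if κ is ultimately periodic in its second argument: there exist N ≥ 0 and t > 0 with κ(s, n) = κ(s, n+t) for all s ∈ {1,…,k-1} and all n ≥ N. -/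
open scoped BigOperators

/-- The generalized Thue–Morse sum with positions shifted by `c`. -/
def gtmA (k L : ℕ) (κ : ℕ → ℕ → ZMod L) (c n : ℕ) : ZMod L :=
  ∑ y ∈ Finset.range (Nat.digits k n).length,
    if (Nat.digits k n).getD y 0 ≠ 0 then κ ((Nat.digits k n).getD y 0) (y + c) else 0

lemma gtmA_zero (k L : ℕ) (κ : ℕ → ℕ → ZMod L) (c : ℕ) : gtmA k L κ c 0 = 0 := by
  simp [gtmA]

lemma gtm_eq_gtmA (k L : ℕ) (κ : ℕ → ℕ → ZMod L) (n : ℕ) :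
    gtm k L κ n = gtmA k L κ 0 n := by
  simp [gtm, gtmA]

lemma gtmA_mul_add (k L : ℕ) (κ : ℕ → ℕ → ZMod L) (hk : 1 < k) (c m r : ℕ) (hr : r < k) :
    gtmA k L κ c (k * m + r) = (if r ≠ 0 then κ r c else 0) + gtmA k L κ (c + 1) m := by
  by_cases h0 : k * m + r = 0
  · have h1 : k * m = 0 ∧ r = 0 := by
      constructor <;> omega
    have hm : m = 0 := by
      rcases Nat.mul_eq_zero.mp h1.1 with h | h
      · omega
      · exact h
    subst hm
    rw [h1.2]
    simp [gtmA_zero]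
  · have hd : Nat.digits k (k * m + r) = r :: Nat.digits k m := by
      rw [Nat.digits_def' hk (Nat.pos_of_ne_zero h0)]
      congr 1
      · rw [Nat.mul_add_mod, Nat.mod_eq_of_lt hr]
      · rw [Nat.mul_add_div (by omega), Nat.div_eq_of_lt hr, Nat.add_zero]
    rw [gtmA, gtmA, hd]
    simp only [List.length_cons]
    rw [Finset.sum_range_succ']
    simp only [List.getD_cons_succ, List.getD_cons_zero, Nat.zero_add]
    rw [add_comm]
    congr 1
    apply Finset.sum_congr rfl
    intro y _
    rw [show y + 1 + c = y + (c + 1) from by omega]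

lemma gtmA_pow_mul_add (k L : ℕ) (κ : ℕ → ℕ → ZMod L) (hk : 1 < k) :
    ∀ e c j n, j < k ^ e →
      gtmA k L κ c (k ^ e * n + j) = gtmA k L κ c j + gtmA k L κ (c + e) n := by
  intro e
  induction e with
  | zero =>
    intro c j n hj
    have : j = 0 := by simpa using Nat.lt_one_iff.mp (by simpa using hj)
    subst this
    simp [gtmA_zero]
  | succ e ih =>
    intro c j n hj
    have hr : j % k < k := Nat.mod_lt _ (by omega)
    have hj' : j / k < k ^ e := by
      apply Nat.div_lt_of_lt_mul
      rw [pow_succ, Nat.mul_comm] at hj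
      exact hj
    have key : k ^ (e + 1) * n + j = k * (k ^ e * n + j / k) + j % k := by
      have hj2 := Nat.div_add_mod j k
      rw [Nat.mul_add, ← Nat.mul_assoc, ← pow_succ']
      omega
    have hjrw : gtmA k L κ c j
        = (if j % k ≠ 0 then κ (j % k) c else 0) + gtmA k L κ (c + 1) (j / k) := by
      conv_lhs => rw [← Nat.div_add_mod j k]
      exact gtmA_mul_add k L κ hk c (j / k) (j % k) hr
    rw [key, gtmA_mul_add k L κ hk c _ _ hr, ih (c + 1) (j / k) n hj', hjrw,
      show c + 1 + e = c + (e + 1) from by omega, add_assoc]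

lemma gtmA_single (k L : ℕ) (κ : ℕ → ℕ → ZMod L) (hk : 1 < k) {s : ℕ}
    (hs0 : s ≠ 0) (hs : s < k) :
    ∀ m c, gtmA k L κ c (s * k ^ m) = κ s (m + c) := by
  intro m
  induction m with
  | zero =>
    intro c
    rw [pow_zero, Nat.mul_one, gtmA, Nat.digits_def' hk (by omega),
      Nat.mod_eq_of_lt hs, Nat.div_eq_of_lt hs, Nat.digits_zero]
    simp [hs0]
  | succ m ih =>
    intro c
    have h1 : s * k ^ (m + 1) = k * (s * k ^ m) + 0 := by ring
    rw [h1, gtmA_mul_add k L κ hk c _ 0 (by omega), ih (c + 1)]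
    simp [show m + (c + 1) = m + 1 + c from by omega]

/-- the generalized Thue–Morse sequence is k-automatic (its k-kernel
is finite) iff κ is ultimately periodic in its second argument. -/
theorem stmt_16 (k L : ℕ) (hk : 1 < k) (hL : 1 < L) (κ : ℕ → ℕ → ZMod L) :
    {g : ℕ → ZMod L | ∃ e j : ℕ, j < k ^ e ∧
        g = fun n => gtm k L κ (k ^ e * n + j)}.Finite ↔
    (∃ N t : ℕ, 0 < t ∧ ∀ s : ℕ, 1 ≤ s → s ≤ k - 1 →
      ∀ n : ℕ, N ≤ n → κ s n = κ s (n + t)) := by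
  constructor
  · intro hfin
    set F : ℕ → (ℕ → ZMod L) := fun e => fun n => gtm k L κ (k ^ e * n + 0) with hF
    have hsub : Set.range F ⊆ {g : ℕ → ZMod L | ∃ e j : ℕ, j < k ^ e ∧
        g = fun n => gtm k L κ (k ^ e * n + j)} := by
      rintro g ⟨e, rfl⟩
      exact ⟨e, 0, pow_pos (by omega) e, rfl⟩
    have hrf : (Set.range F).Finite := hfin.subset hsub
    have hninj : ¬ Function.Injective F := fun hinj =>
      (Set.infinite_range_of_injective hinj) hrf
    rw [Function.not_injective_iff] at hninj
    obtain ⟨e, e', hEq, hne⟩ := hninj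
    obtain ⟨a, b, hab, hE⟩ : ∃ a b, a < b ∧ F a = F b := by
      rcases hne.lt_or_gt with h | h
      · exact ⟨e, e', h, hEq⟩
      · exact ⟨e', e, h, hEq.symm⟩
    refine ⟨a, b - a, by omega, ?_⟩
    intro s hs1 hs2 n hn
    have hs : s < k := by omega
    have key : ∀ c m : ℕ, gtm k L κ (k ^ c * (s * k ^ m) + 0) = κ s (m + c) := by
      intro c m
      rw [gtm_eq_gtmA,
        gtmA_pow_mul_add k L κ hk c 0 0 (s * k ^ m) (pow_pos (by omega) c),
        gtmA_zero, zero_add, Nat.zero_add,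
        gtmA_single k L κ hk (by omega) hs m c]
    have hx := congrFun hE (s * k ^ (n - a))
    simp only [hF] at hx
    rw [key a (n - a), key b (n - a)] at hx
    rw [show n - a + a = n from by omega, show n - a + b = n + (b - a) from by omega] at hx
    exact hx
  · rintro ⟨N, t, ht, hper⟩
    haveI : NeZero L := ⟨by omega⟩
    have period : ∀ e, N ≤ e → gtmA k L κ e = gtmA k L κ (e + t) := by
      intro e he
      funext n
      unfold gtmA
      apply Finset.sum_congr rfl
      intro y hy
      set d := (Nat.digits k n).getD y 0 with hd
      by_cases h0 : d = 0
      · simp [h0]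
      · have hmem : d ∈ Nat.digits k n := by
          rw [hd, List.getD_eq_getElem _ _ (Finset.mem_range.mp hy)]
          exact List.getElem_mem _
        have hdk : d < k := Nat.digits_lt_base hk hmem
        rw [if_pos h0, if_pos h0]
        rw [show y + (e + t) = (y + e) + t from by omega]
        exact hper d (by omega) (by omega) (y + e) (by omega)
    have reduce : ∀ e, ∃ e' < N + t, gtmA k L κ e = gtmA k L κ e' := by
      intro e
      induction e using Nat.strong_induction_on with
      | _ e ih =>
        by_cases h : e < N + t
        · exact ⟨e, h, rfl⟩
        · obtain ⟨e', he', heq⟩ := ih (e - t) (by omega)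
          have h2 : gtmA k L κ (e - t) = gtmA k L κ e := by
            have h3 := period (e - t) (by omega)
            rwa [show e - t + t = e from by omega] at h3
          exact ⟨e', he', h2 ▸ heq⟩
    have hsub : {g : ℕ → ZMod L | ∃ e j : ℕ, j < k ^ e ∧
        g = fun n => gtm k L κ (k ^ e * n + j)} ⊆
        Set.range (fun p : ZMod L × Fin (N + t) => fun n => p.1 + gtmA k L κ p.2 n) := by
      rintro g ⟨e, j, hj, rfl⟩
      obtain ⟨e', he', heq⟩ := reduce e
      refine ⟨(gtm k L κ j, ⟨e', he'⟩), ?_⟩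
      funext n
      show gtm k L κ j + gtmA k L κ e' n = gtm k L κ (k ^ e * n + j)
      conv_rhs => rw [gtm_eq_gtmA, gtmA_pow_mul_add k L κ hk e 0 j n hj]
      rw [Nat.zero_add, ← gtm_eq_gtmA, heq]
    exact (Set.finite_range _).subset hsub
end

section
/- Let k, L > 1, κ : {1,…,k-1} × ℕ → ℤ/L, and let a be the generalized Thue–Morse sequence of type (L,k,κ) taking values in {0,…,L-1}. Suppose there is no A ∈ ℕ with κ(s,A+y) ≡ κ(1,A)·s·k^y (mod L) for all s, y. Then for every integer β ≥ L and all N ≥ 0, l > 0, the real number Σ_{n≥0} a(N + n·l)/β^{n+1} is irrational. -/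
open scoped BigOperators

def sumK {L : ℕ} (κ : ℕ → ℕ → ZMod L) : ℕ → List ℕ → ZMod L
  | _, [] => 0
  | r, a :: t => (if a ≠ 0 then κ a r else 0) + sumK κ (r+1) t

def gg (k : ℕ) {L : ℕ} (κ : ℕ → ℕ → ZMod L) (r n : ℕ) : ZMod L :=
  sumK κ r (Nat.digits k n)

lemma sumK_eq {L : ℕ} (κ : ℕ → ℕ → ZMod L) (r : ℕ) (lst : List ℕ) :
    sumK κ r lst = ∑ y ∈ Finset.range lst.length,
      (if lst.getD y 0 ≠ 0 then κ (lst.getD y 0) (y + r) else 0) := by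
  induction lst generalizing r with
  | nil => simp [sumK]
  | cons a t ih =>
    rw [sumK, ih (r+1), List.length_cons, Finset.sum_range_succ']
    simp only [List.getD_cons_succ, List.getD_cons_zero, Nat.zero_add]
    rw [add_comm]
    congr 1
    apply Finset.sum_congr rfl
    intro y _
    rw [show y + 1 + r = y + (r+1) by omega]

lemma gtm_eq_gg (k L : ℕ) (κ : ℕ → ℕ → ZMod L) (n : ℕ) :
    gtm k L κ n = gg k κ 0 n := by
  rw [gtm, gg, sumK_eq]
  simp

lemma gg_zero (k : ℕ) {L : ℕ} (κ : ℕ → ℕ → ZMod L) (r : ℕ) : gg k κ r 0 = 0 := by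
  simp [gg, sumK]

lemma gg_def (k : ℕ) {L : ℕ} (κ : ℕ → ℕ → ZMod L) (hk : 1 < k) (r n : ℕ) (hn : n ≠ 0) :
    gg k κ r n = (if n % k ≠ 0 then κ (n % k) r else 0) + gg k κ (r+1) (n / k) := by
  rw [gg, Nat.digits_def' hk (Nat.pos_of_ne_zero hn), sumK, gg]

lemma gg_split (k : ℕ) {L : ℕ} (κ : ℕ → ℕ → ZMod L) (hk : 1 < k) (j : ℕ) :
    ∀ u v r : ℕ, v < k ^ j →
      gg k κ r (u * k ^ j + v) = gg k κ (r + j) u + gg k κ r v := by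
  induction j with
  | zero =>
    intro u v r hv
    have : v = 0 := by simpa using hv
    subst this
    simp [gg_zero]
  | succ j ih =>
    intro u v r hv
    have hk0 : 0 < k := by omega
    have hkj : 0 < k ^ j := Nat.pow_pos hk0
    rcases Nat.eq_zero_or_pos (u * k ^ (j+1) + v) with h0 | hpos
    · have hu : u = 0 := by
        have : 0 < k ^ (j+1) := Nat.pow_pos hk0
        nlinarith [Nat.eq_zero_of_add_eq_zero_right h0]
      have hv0 : v = 0 := by omega
      simp [hu, hv0, gg_zero]
    · rw [gg_def k κ hk r _ (by omega)]
      have hmod : (u * k ^ (j+1) + v) % k = v % k := by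
        rw [show u * k ^ (j+1) + v = v + (u * k ^ j) * k by ring]
        exact Nat.add_mul_mod_self_right v (u * k ^ j) k
      have hdiv : (u * k ^ (j+1) + v) / k = u * k ^ j + v / k := by
        rw [show u * k ^ (j+1) + v = v + (u * k ^ j) * k by ring,
            Nat.add_mul_div_right v (u * k ^ j) hk0]
        omega
      have hvk : v / k < k ^ j := by
        rw [Nat.div_lt_iff_lt_mul hk0, ← pow_succ]
        exact hv
      rw [hmod, hdiv, ih u (v / k) (r+1) hvk]
      rcases Nat.eq_zero_or_pos v with hv0 | hvpos
      · subst hv0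
        simp [gg_zero, show r + 1 + j = r + (j+1) by omega]
      · rw [gg_def k κ hk r v (by omega),
            show r + 1 + j = r + (j+1) by omega]
        abel

section
variable {L : ℕ} {k : ℕ} (κ : ℕ → ℕ → ZMod L) (hk : 1 < k)
include hk

lemma gg_single (r s : ℕ) (h1 : 1 ≤ s) (h2 : s < k) : gg k κ r s = κ s r := by
  rw [gg_def k κ hk r s (by omega), Nat.mod_eq_of_lt h2, Nat.div_eq_of_lt h2, gg_zero]
  have : s ≠ 0 := by omega
  simp [this]

lemma gg_mulk (r t : ℕ) : gg k κ r (t * k) = gg k κ (r+1) t := by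
  have := gg_split k κ hk 1 t 0 r (by simpa using Nat.lt_of_lt_of_le Nat.zero_lt_one hk.le)
  simpa [gg_zero] using this

lemma gg_mulk1 (r t : ℕ) : gg k κ r (t * k + 1) = gg k κ (r+1) t + κ 1 r := by
  have := gg_split k κ hk 1 t 1 r (by simpa using hk)
  rw [pow_one] at this
  rw [this, gg_single κ hk r 1 le_rfl hk]

end


theorem exists_e (l N c : ℕ) (hl : 0 < l) :
    ∃ e, 1 ≤ e ∧ e ≤ l ∧ (N + e) % l = c % l := by
  have hb : N % l < l := Nat.mod_lt _ hl
  have hc : c % l < l := Nat.mod_lt _ hl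
  rcases lt_trichotomy (N % l) (c % l) with h | h | h
  · refine ⟨c % l - N % l, by omega, by omega, ?_⟩
    rw [Nat.add_mod, Nat.mod_eq_of_lt (show c % l - N % l < l by omega),
        show N % l + (c % l - N % l) = c % l by omega, Nat.mod_mod _ _]
  · exact ⟨l, hl, le_rfl, by rw [Nat.add_mod_right]; exact h⟩
  · refine ⟨l + (c % l) - N % l, by omega, by omega, ?_⟩
    rw [Nat.add_mod, Nat.mod_eq_of_lt (show l + (c % l) - N % l < l by omega),
        show N % l + (l + (c % l) - N % l) = l + c % l by omega,
        Nat.add_mod_left, Nat.mod_mod _ _]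

theorem comb {L k : ℕ} (κ : ℕ → ℕ → ZMod L) (hk : 1 < k) (N l D M : ℕ)
    (hl : 0 < l) (hlD : l ∣ D) (hD : 0 < D)
    (hper : ∀ m, M ≤ m → m % l = N % l → gg k κ 0 (m + D) = gg k κ 0 m) :
    ∃ A, ∀ s y : ℕ, 1 ≤ s → s ≤ k - 1 →
      κ s (A + y) = κ 1 A * (s : ZMod L) * (k : ZMod L) ^ y := by
  have hk0 : 0 < k := by omega
  set dd : ℕ → ℕ := fun r => Nat.gcd (k ^ r) l with hdd
  -- argmax of dd
  have hbdd : BddAbove (Set.range dd) := by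
    refine ⟨l, ?_⟩
    rintro v ⟨r, rfl⟩
    exact Nat.le_of_dvd hl (Nat.gcd_dvd_right _ _)
  obtain ⟨R0, hR0⟩ : ∃ R0, ∀ r, dd r ≤ dd R0 := by
    have hmem := Nat.sSup_mem (Set.range_nonempty dd) hbdd
    obtain ⟨R0, hR0⟩ := hmem
    exact ⟨R0, fun r => hR0 ▸ le_csSup hbdd (Set.mem_range_self r)⟩
  have hddpos : ∀ r, 0 < dd r := fun r => Nat.gcd_pos_of_pos_right _ hl
  have hdmono : ∀ r r', r ≤ r' → dd r ∣ dd r' := by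
    intro r r' h
    exact Nat.dvd_gcd (dvd_trans (Nat.gcd_dvd_left _ _) (pow_dvd_pow k h)) (Nat.gcd_dvd_right _ _)
  have hstab : ∀ r, R0 ≤ r → dd r = dd R0 :=
    fun r h => le_antisymm (hR0 r) (Nat.le_of_dvd (hddpos r) (hdmono R0 r h))
  set d := dd R0 with hd
  set lstar := l / d with hlstar
  have hdl : d ∣ l := Nat.gcd_dvd_right _ _
  have hls_mul : lstar * d = l := Nat.div_mul_cancel hdl
  have hlspos : 0 < lstar := Nat.div_pos (Nat.le_of_dvd hl hdl) (hddpos R0)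
  -- coprimality
  have hco : Nat.Coprime k lstar := by
    set c := Nat.gcd k lstar with hc
    have hcpos : 0 < c := Nat.gcd_pos_of_pos_left _ hk0
    have h1 : c * d ∣ l := by
      rw [← hls_mul]
      exact mul_dvd_mul (Nat.gcd_dvd_right _ _) dvd_rfl
    have h2 : c * d ∣ k * k ^ R0 :=
      mul_dvd_mul (Nat.gcd_dvd_left k lstar) (Nat.gcd_dvd_left _ _)
    have h3 : c * d ∣ dd (R0 + 1) := by
      refine Nat.dvd_gcd ?_ h1
      rw [pow_succ]
      calc c * d ∣ k * k ^ R0 := h2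
        _ = k ^ R0 * k := by ring
    rw [hstab (R0+1) (by omega)] at h3
    have h4 : c * d ≤ d := Nat.le_of_dvd (hddpos R0) h3
    have hd0 : 0 < d := hddpos R0
    have : c = 1 := by nlinarith
    exact this
  haveI : NeZero lstar := ⟨by omega⟩
  -- existence of t with t*k ≡ s mod lstar
  have exists_t : ∀ s : ℕ, ∃ t, 1 ≤ t ∧ (t * k) % lstar = s % lstar := by
    intro s
    have hunit : (k : ZMod lstar) * (k : ZMod lstar)⁻¹ = 1 :=
      ZMod.coe_mul_inv_eq_one k hco
    refine ⟨((s : ZMod lstar) * (k : ZMod lstar)⁻¹).val + lstar, by omega, ?_⟩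
    have : ((((s : ZMod lstar) * (k : ZMod lstar)⁻¹).val + lstar) * k : ℕ) ≡ s [MOD lstar] := by
      rw [← ZMod.natCast_eq_natCast_iff]
      push_cast
      rw [ZMod.natCast_val, ZMod.cast_id, ZMod.natCast_self]
      ring_nf
      rw [mul_assoc, mul_comm ((k : ZMod lstar))⁻¹, hunit, mul_one]
    exact this
  -- the working range
  set R := max R0 (M + D + l) with hR
  have hdvd_kr : ∀ r, R ≤ r → d ∣ k ^ r := by
    intro r hr
    have : dd r = d := hstab r (le_trans (le_max_left _ _) hr)
    rw [← this]
    exact Nat.gcd_dvd_left _ _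
  have hpow : ∀ r, R ≤ r → M + D + l < k ^ r := by
    intro r hr
    have h1 : r < k ^ r := Nat.lt_pow_self hk
    have h2 : M + D + l ≤ r := le_trans (le_max_right R0 _) hr
    omega
  have hlD' : l ≤ D := Nat.le_of_dvd hD hlD
  -- key relation
  have keyrel : ∀ r, R ≤ r → ∀ u u', 1 ≤ u → 1 ≤ u' →
      (u + 1) * k ^ r % l = (u' + 1) * k ^ r % l →
      gg k κ r (u+1) + gg k κ r u' = gg k κ r u + gg k κ r (u'+1) := by
    intro r hr u u' hu hu' hcong
    obtain ⟨e, he1, he2, he3⟩ := exists_e l N ((u + 1) * k ^ r) hl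
    have hbig := hpow r hr
    have inst : ∀ w, 1 ≤ w → (N + e) % l = ((w + 1) * k ^ r) % l →
        gg k κ r (w+1) + gg k κ 0 (D - e) =
        gg k κ r w + gg k κ 0 (k ^ r - e) := by
      intro w hw hNe
      have hklow : 2 * k ^ r ≤ (w+1) * k ^ r := Nat.mul_le_mul_right _ (by omega)
      have hexp : (w + 1) * k ^ r = w * k ^ r + k ^ r := by ring
      set m := (w + 1) * k ^ r - e with hm
      have hM : M ≤ m := by omega
      have hme : m + e = (w + 1) * k ^ r := by omega
      have hmod : m % l = N % l := by
        have hc2 : (N + e) % l = (m + e) % l := by rw [hNe, hme]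
        exact (Nat.ModEq.add_right_cancel' e hc2).symm
      have hper' := hper m hM hmod
      have hsplit1 : m + D = (w + 1) * k ^ r + (D - e) := by omega
      have hsplit2 : m = w * k ^ r + (k ^ r - e) := by omega
      rw [hsplit1, hsplit2] at hper'
      rw [gg_split k κ hk r (w+1) (D - e) 0 (by omega),
          gg_split k κ hk r w (k ^ r - e) 0 (by omega)] at hper'
      rw [Nat.zero_add] at hper'
      linear_combination hper'
    have i1 := inst u hu he3
    have i2 := inst u' hu' (he3.trans hcong)
    linear_combination i1 - i2
  -- step relation
  have step : ∀ r, R ≤ r → ∀ s, 1 ≤ s →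
      gg k κ r (s + 1) = gg k κ r s + κ 1 r := by
    intro r hr s hs
    obtain ⟨t, ht1, htm⟩ := exists_t s
    have htk : 1 ≤ t * k := Nat.one_le_iff_ne_zero.mpr (by positivity)
    have hcong : (s + 1) * k ^ r % l = (t * k + 1) * k ^ r % l := by
      have h1 : (t * k) * k ^ r ≡ s * k ^ r [MOD lstar * k ^ r] :=
        Nat.ModEq.mul_right' _ htm
      have h2 : l ∣ lstar * k ^ r := by
        rw [← hls_mul]
        exact Nat.mul_dvd_mul_left lstar (hdvd_kr r hr)
      have h3 : (t * k) * k ^ r ≡ s * k ^ r [MOD l] := Nat.ModEq.of_dvd h2 h1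
      have h4 := (Nat.ModEq.add_right (k ^ r) h3).symm
      calc (s + 1) * k ^ r % l = (s * k ^ r + k ^ r) % l := by ring_nf
        _ = ((t * k) * k ^ r + k ^ r) % l := h4
        _ = (t * k + 1) * k ^ r % l := by ring_nf
    have hkey := keyrel r hr s (t * k) hs htk hcong
    rw [gg_mulk κ hk r t, gg_mulk1 κ hk r t] at hkey
    linear_combination hkey
  -- linearity in s
  have lin : ∀ r, R ≤ r → ∀ s, 1 ≤ s → gg k κ r s = (s : ZMod L) * κ 1 r := by
    intro r hr s hs
    induction s with
    | zero => omega
    | succ s ih =>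
      rcases Nat.eq_zero_or_pos s with h0 | hpos
      · subst h0
        rw [gg_single κ hk r 1 le_rfl hk]
        push_cast
        ring
      · rw [step r hr s hpos, ih hpos]
        push_cast
        ring
  -- geometric growth
  have geom : ∀ y, κ 1 (R + y) = (k : ZMod L) ^ y * κ 1 R := by
    intro y
    induction y with
    | zero => simp
    | succ y ih =>
      have h1 : gg k κ (R + y) k = (k : ZMod L) * κ 1 (R + y) :=
        lin (R + y) (by omega) k (by omega)
      have h2 : gg k κ (R + y) k = κ 1 (R + y + 1) := by
        have := gg_mulk κ hk (R + y) 1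
        rw [one_mul] at this
        rw [this, gg_single κ hk (R + y + 1) 1 le_rfl hk]
      rw [show R + (y+1) = R + y + 1 by omega, ← h2, h1, ih, pow_succ]
      ring
  -- conclusion
  refine ⟨R, fun s y hs1 hs2 => ?_⟩
  have hsk : s < k := by omega
  rw [← gg_single κ hk (R + y) s hs1 hsk, lin (R + y) (by omega) s hs1, geom y]
  ring

namespace St17

lemma summ_aux {β : ℕ} (hβ : 2 ≤ β) (c : ℕ → ℕ) (hc : ∀ n, c n < β) :
    Summable (fun m : ℕ => (c m : ℝ) * ((β:ℝ)⁻¹) ^ (m + 1)) := by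
  set q : ℝ := (β:ℝ)⁻¹ with hq
  have hβ0 : (0:ℝ) < β := by exact_mod_cast (by omega : 0 < β)
  have hq0 : 0 ≤ q := by positivity
  have hq1 : q < 1 := by
    rw [hq, inv_lt_one_iff₀]
    right; exact_mod_cast (by omega : 1 < β)
  have hgeo : Summable (fun m : ℕ => ((β:ℝ) * q) * q ^ m) :=
    (summable_geometric_of_lt_one hq0 hq1).mul_left _
  have hgeo2 : Summable (fun m : ℕ => (β:ℝ) * q ^ (m+1)) :=
    hgeo.congr (fun m => by rw [pow_succ]; ring)
  refine Summable.of_nonneg_of_le (fun m => by positivity) (fun m => ?_) hgeo2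
  have h1 : (c m : ℝ) ≤ (β:ℝ) := by
    have := hc m; exact_mod_cast this.le
  have h2 : (0:ℝ) ≤ q ^ (m+1) := by positivity
  exact mul_le_mul_of_nonneg_right h1 h2

lemma valgen {β : ℕ} (hβ : 2 ≤ β) (s : ℕ) :
    ∑' m : ℕ, ((β:ℝ) - 1) * ((β:ℝ)⁻¹) ^ (m + s + 1) = ((β:ℝ)⁻¹) ^ s := by
  set q : ℝ := (β:ℝ)⁻¹ with hq
  have hβ0 : (0:ℝ) < β := by exact_mod_cast (by omega : 0 < β)
  have hβ1 : (1:ℝ) < β := by exact_mod_cast (by omega : 1 < β)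
  have hq0 : 0 ≤ q := by positivity
  have hq1 : q < 1 := by
    rw [hq, inv_lt_one_iff₀]; right; exact hβ1
  have hgeo : ∑' m : ℕ, q ^ m = (1 - q)⁻¹ := tsum_geometric_of_lt_one hq0 hq1
  calc ∑' m : ℕ, ((β:ℝ) - 1) * q ^ (m + s + 1)
      = ∑' m : ℕ, (((β:ℝ) - 1) * q ^ (s+1)) * q ^ m := by
        refine tsum_congr (fun m => ?_)
        rw [show m + s + 1 = (s + 1) + m by omega, pow_add]
        ring
    _ = (((β:ℝ) - 1) * q ^ (s+1)) * ((1 - q)⁻¹) := by rw [tsum_mul_left, hgeo]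
    _ = q ^ s := by
        have h1q : 1 - q = ((β:ℝ) - 1) * q := by
          rw [hq]; field_simp
        rw [h1q, pow_succ]
        have hb1 : (β:ℝ) - 1 ≠ 0 := by linarith
        have hqne : q ≠ 0 := by positivity
        field_simp


lemma helper {β : ℕ} (hβ : 2 ≤ β) (v w : ℕ → ℕ) (hv : ∀ m, v m < β) (hw : ∀ m, w m < β)
    (heq : ∑' m : ℕ, (v m : ℝ) * ((β:ℝ)⁻¹) ^ (m + 1)
         = ∑' m : ℕ, (w m : ℝ) * ((β:ℝ)⁻¹) ^ (m + 1))
    (h0 : w 0 < v 0) :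
    (∀ m, v (m + 1) = 0) ∧ (∀ m, w (m + 1) = β - 1) := by
  set q : ℝ := (β:ℝ)⁻¹ with hq
  have hβ0 : (0:ℝ) < β := by exact_mod_cast (by omega : 0 < β)
  have hqpos : 0 < q := by positivity
  have hsv := summ_aux hβ v hv
  have hsw := summ_aux hβ w hw
  rw [Summable.tsum_eq_zero_add hsv, Summable.tsum_eq_zero_add hsw] at heq
  have hsv1 : Summable (fun m : ℕ => (v (m+1) : ℝ) * q ^ (m + 1 + 1)) :=
    ((summ_aux hβ (fun m => v (m+1)) (fun m => hv (m+1))).mul_left q).congr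
      (fun m => by rw [pow_succ]; ring)
  have hsw1 : Summable (fun m : ℕ => (w (m+1) : ℝ) * q ^ (m + 1 + 1)) :=
    ((summ_aux hβ (fun m => w (m+1)) (fun m => hw (m+1))).mul_left q).congr
      (fun m => by rw [pow_succ]; ring)
  have hsb1 : Summable (fun m : ℕ => ((β:ℝ) - 1) * q ^ (m + 1 + 1)) := by
    have := (summable_geometric_of_lt_one (le_of_lt hqpos)
      (by rw [hq, inv_lt_one_iff₀]; right; exact_mod_cast (by omega : 1 < β))).mul_left
      (((β:ℝ) - 1) * q ^ 2)
    exact this.congr (fun m => by rw [show m + 1 + 1 = 2 + m by omega, pow_add]; ring)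
  set Sv := ∑' m : ℕ, (v (m+1) : ℝ) * q ^ (m + 1 + 1) with hSv
  set Sw := ∑' m : ℕ, (w (m+1) : ℝ) * q ^ (m + 1 + 1) with hSw
  have hbval : ∑' m : ℕ, ((β:ℝ) - 1) * q ^ (m + 1 + 1) = q := by
    have h := valgen hβ 1
    rw [pow_one] at h
    exact h
  have hSv0 : 0 ≤ Sv := tsum_nonneg (fun m => by positivity)
  have hSwle : Sw ≤ q := by
    rw [← hbval]
    refine Summable.tsum_le_tsum (fun m => ?_) hsw1 hsb1
    have h1 : (w (m+1) : ℝ) + 1 ≤ (β:ℝ) := by exact_mod_cast hw (m+1)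
    have h2 : (0:ℝ) ≤ q ^ (m + 1 + 1) := by positivity
    nlinarith
  have h01 : (w 0 : ℝ) + 1 ≤ (v 0 : ℝ) := by exact_mod_cast h0
  have hkey : q ≤ ((v 0 : ℝ) - (w 0)) * q := by nlinarith
  have hexpand : ((v 0 : ℝ) - (w 0)) * q = (v 0 : ℝ) * q - (w 0 : ℝ) * q := by ring
  have heq' : (v 0 : ℝ) * q ^ (0 + 1) + Sv = (w 0 : ℝ) * q ^ (0 + 1) + Sw := heq
  rw [show (0:ℕ) + 1 = 1 by rfl, pow_one] at heq'
  have hSveq : Sv = 0 := le_antisymm (by linarith) hSv0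
  have hSweq : Sw = q := le_antisymm hSwle (by linarith)
  constructor
  · intro m
    have hle : (v (m+1) : ℝ) * q ^ (m + 1 + 1) ≤ Sv :=
      Summable.le_tsum hsv1 m (fun j _ => by positivity)
    have hge : (0:ℝ) ≤ (v (m+1) : ℝ) * q ^ (m + 1 + 1) := by positivity
    have hz : (v (m+1) : ℝ) * q ^ (m + 1 + 1) = 0 := by linarith [hSveq ▸ hle]
    have hqn : q ^ (m + 1 + 1) ≠ 0 := by positivity
    have : (v (m+1) : ℝ) = 0 := by
      rcases mul_eq_zero.mp hz with h | h
      · exact h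
      · exact absurd h hqn
    exact_mod_cast this
  · intro m
    have hdiff : ∑' m : ℕ, (((β:ℝ) - 1) * q ^ (m + 1 + 1) - (w (m+1) : ℝ) * q ^ (m + 1 + 1))
        = 0 := by
      rw [Summable.tsum_sub hsb1 hsw1, hbval, ← hSw, hSweq, sub_self]
    have hterm : ∀ j : ℕ, 0 ≤ ((β:ℝ) - 1) * q ^ (j + 1 + 1) - (w (j+1) : ℝ) * q ^ (j + 1 + 1) := by
      intro j
      have h1 : (w (j+1) : ℝ) + 1 ≤ (β:ℝ) := by exact_mod_cast hw (j+1)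
      have h2 : (0:ℝ) ≤ q ^ (j + 1 + 1) := by positivity
      nlinarith
    have hle : ((β:ℝ) - 1) * q ^ (m + 1 + 1) - (w (m+1) : ℝ) * q ^ (m + 1 + 1)
        ≤ 0 := by
      rw [← hdiff]
      exact Summable.le_tsum (hsb1.sub hsw1) m (fun j _ => hterm j)
    have hz : ((β:ℝ) - 1) * q ^ (m + 1 + 1) - (w (m+1) : ℝ) * q ^ (m + 1 + 1) = 0 :=
      le_antisymm hle (hterm m)
    have hqn : q ^ (m + 1 + 1) ≠ 0 := by positivity
    have hcast : (w (m+1) : ℝ) = (β:ℝ) - 1 := by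
      have := sub_eq_zero.mp hz
      field_simp at this ⊢
      linarith [this]
    have : (w (m+1) : ℝ) = ((β - 1 : ℕ) : ℝ) := by
      rw [hcast, Nat.cast_sub (by omega : 1 ≤ β), Nat.cast_one]
    exact_mod_cast this

theorem rat_periodic {β : ℕ} (hβ : 2 ≤ β) (d : ℕ → ℕ) (hd : ∀ n, d n < β)
    (hx : ¬ Irrational (∑' n : ℕ, (d n : ℝ) * ((β:ℝ)⁻¹) ^ (n + 1))) :
    ∃ p, 0 < p ∧ ∃ n0, ∀ n, n0 ≤ n → d (n + p) = d n := by
  set q : ℝ := (β:ℝ)⁻¹ with hq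
  have hβ0 : (0:ℝ) < β := by exact_mod_cast (by omega : 0 < β)
  have hqpos : 0 < q := by positivity
  set x : ℝ := ∑' n : ℕ, (d n : ℝ) * q ^ (n + 1) with hxdef
  obtain ⟨r, hr⟩ : x ∈ Set.range ((↑) : ℚ → ℝ) := not_not.mp hx
  set T : ℕ → ℝ := fun a => ∑' m : ℕ, (d (a + m) : ℝ) * q ^ (m + 1) with hT
  have hsummT : ∀ a, Summable (fun m : ℕ => (d (a + m) : ℝ) * q ^ (m + 1)) :=
    fun a => summ_aux hβ (fun m => d (a + m)) (fun m => hd _)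
  have hT8 : ∀ n, (∑ m ∈ Finset.range n, (d m : ℝ) * q ^ (m + 1)) + q ^ n * T n = x := by
    intro n
    have h1 := Summable.sum_add_tsum_nat_add (f := fun m : ℕ => (d m : ℝ) * q ^ (m + 1)) n
      (summ_aux hβ d hd)
    beta_reduce at h1
    rw [← hxdef] at h1
    rw [← h1]
    congr 1
    rw [hT]
    rw [← tsum_mul_left]
    refine tsum_congr (fun m => ?_)
    rw [show m + n + 1 = n + (m + 1) by omega, pow_add]
    ring
  have hT0 : ∀ a, 0 ≤ T a := fun a => tsum_nonneg (fun m => by positivity)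
  have hT1 : ∀ a, T a ≤ 1 := by
    intro a
    have hval := valgen hβ 0
    rw [pow_zero] at hval
    have : ∀ m : ℕ, (d (a + m) : ℝ) * q ^ (m + 1) ≤ ((β:ℝ) - 1) * q ^ (m + 0 + 1) := by
      intro m
      rw [show m + 0 + 1 = m + 1 by omega]
      have h1 : (d (a + m) : ℝ) + 1 ≤ (β:ℝ) := by exact_mod_cast hd (a + m)
      have h2 : (0:ℝ) ≤ q ^ (m + 1) := by positivity
      nlinarith
    calc T a ≤ ∑' m : ℕ, ((β:ℝ) - 1) * q ^ (m + 0 + 1) :=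
          Summable.tsum_le_tsum this (hsummT a) (by
            have := summ_aux hβ (fun _ => β - 1) (fun _ => (by omega : β - 1 < β))
            refine this.congr (fun m => ?_)
            rw [show m + 0 + 1 = m + 1 by omega, Nat.cast_sub (by omega : 1 ≤ β), Nat.cast_one])
      _ = 1 := hval
  -- integer values
  set S : ℕ → ℕ := fun n => ∑ m ∈ Finset.range n, d m * β ^ (n - 1 - m) with hS
  set z : ℕ → ℤ := fun n => r.num * (β:ℤ) ^ n - (r.den : ℤ) * (S n : ℤ) with hz
  have hrden : (r.den : ℝ) ≠ 0 := by
    have := r.den_nz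
    exact_mod_cast this
  have hzval : ∀ n, (z n : ℝ) = (r.den : ℝ) * T n := by
    intro n
    set P : ℝ := ∑ m ∈ Finset.range n, (d m : ℝ) * q ^ (m + 1) with hP
    have h8 := hT8 n
    have hqβ : q ^ n * (β:ℝ) ^ n = 1 := by
      rw [← mul_pow, hq, inv_mul_cancel₀ (ne_of_gt hβ0), one_pow]
    have hTn : T n = (x - P) * (β:ℝ) ^ n := by
      have hstep : x - P = q ^ n * T n := by rw [← h8]; ring
      calc T n = T n * (q ^ n * (β:ℝ) ^ n) := by rw [hqβ, mul_one]
        _ = (q ^ n * T n) * (β:ℝ) ^ n := by ring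
        _ = (x - P) * (β:ℝ) ^ n := by rw [hstep]
    have hdenx : (r.den : ℝ) * x = (r.num : ℝ) := by
      rw [← hr, Rat.cast_def]
      field_simp
    have hβP : (β:ℝ) ^ n * P = (S n : ℝ) := by
      rw [hP, hS, Finset.mul_sum]
      push_cast
      refine Finset.sum_congr rfl (fun m hm => ?_)
      have hmn : m < n := Finset.mem_range.mp hm
      have hpow : (β:ℝ) ^ n = (β:ℝ) ^ (n - 1 - m) * (β:ℝ) ^ (m + 1) := by
        rw [← pow_add]
        congr 1
        omega
      rw [hpow, hq, inv_pow]
      field_simp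
    rw [hz]
    push_cast
    rw [hTn]
    calc (r.num : ℝ) * (β:ℝ) ^ n - (r.den : ℝ) * (S n : ℝ)
        = ((r.den : ℝ) * x) * (β:ℝ) ^ n - (r.den : ℝ) * ((β:ℝ) ^ n * P) := by
          rw [hdenx, hβP]
      _ = (r.den : ℝ) * ((x - P) * (β:ℝ) ^ n) := by ring
  have hzb : ∀ n, 0 ≤ z n ∧ z n ≤ (r.den : ℤ) := by
    intro n
    have h1 : (0:ℝ) ≤ (z n : ℝ) := by
      rw [hzval n]
      have := hT0 n
      positivity
    have h2 : (z n : ℝ) ≤ (r.den : ℝ) := by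
      rw [hzval n]
      have h3 := hT1 n
      have h4 : (0:ℝ) ≤ (r.den : ℝ) := by positivity
      nlinarith
    constructor
    · exact_mod_cast h1
    · exact_mod_cast h2
  have hpigeon : ∃ i j : ℕ, i ≠ j ∧ z i = z j := by
    have h := Finite.exists_ne_map_eq_of_infinite
      (fun n : ℕ => (⟨(z n).toNat, by have := hzb n; omega⟩ : Fin (r.den + 1)))
    obtain ⟨i, j, hij, hF⟩ := h
    refine ⟨i, j, hij, ?_⟩
    have h2 := congrArg Fin.val hF
    simp only [] at h2
    have h3 := hzb i
    have h4 := hzb j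
    omega
  obtain ⟨i0, j0, hij0, hzeq⟩ := hpigeon
  have hTeq0 : T i0 = T j0 := by
    have h1 : (r.den : ℝ) * T i0 = (r.den : ℝ) * T j0 := by
      rw [← hzval, ← hzval, hzeq]
    exact mul_left_cancel₀ hrden h1
  have main : ∀ i j : ℕ, i < j → T i = T j →
      ∃ p, 0 < p ∧ ∃ n0, ∀ n, n0 ≤ n → d (n + p) = d n := by
    intro i j hij hTeq
    set p := j - i with hp
    by_cases hall : ∀ m, d (i + m) = d (j + m)
    · refine ⟨p, by omega, i, fun n hn => ?_⟩
      have h1 := (hall (n - i)).symm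
      rw [show i + (n - i) = n by omega, show j + (n - i) = n + p by omega] at h1
      exact h1
    · exfalso
      push_neg at hall
      have hm0 := Nat.find_spec hall
      set m0 := Nat.find hall with hm0def
      have hmin : ∀ m, m < m0 → d (i + m) = d (j + m) :=
        fun m hm => not_not.mp (Nat.find_min hall hm)
      have hsplit : ∀ a, T a = (∑ m ∈ Finset.range m0, (d (a + m) : ℝ) * q ^ (m + 1))
          + q ^ m0 * T (a + m0) := by
        intro a
        have h1 := Summable.sum_add_tsum_nat_add (f := fun m : ℕ => (d (a + m) : ℝ) * q ^ (m + 1)) m0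
          (hsummT a)
        beta_reduce at h1
        show (∑' m : ℕ, (d (a + m) : ℝ) * q ^ (m + 1)) = _
        rw [← h1]
        congr 1
        rw [← tsum_mul_left]
        refine tsum_congr (fun m => ?_)
        rw [show a + (m + m0) = a + m0 + m by omega,
            show m + m0 + 1 = m0 + (m + 1) by omega, pow_add]
        ring
      have hps : (∑ m ∈ Finset.range m0, (d (i + m) : ℝ) * q ^ (m + 1))
          = ∑ m ∈ Finset.range m0, (d (j + m) : ℝ) * q ^ (m + 1) :=
        Finset.sum_congr rfl (fun m hm => by
          rw [hmin m (Finset.mem_range.mp hm)])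
      have hTm0 : T (i + m0) = T (j + m0) := by
        have h1 := hTeq
        rw [hsplit i, hsplit j, hps] at h1
        have h2 : q ^ m0 * T (i + m0) = q ^ m0 * T (j + m0) := by linarith
        exact mul_left_cancel₀ (by positivity) h2
      have heq2 : ∑' m : ℕ, ((fun m => d (i + m0 + m)) m : ℝ) * q ^ (m + 1)
          = ∑' m : ℕ, ((fun m => d (j + m0 + m)) m : ℝ) * q ^ (m + 1) := by
        have h1 : i + m0 + 0 = i + (m0 + 0) := by omega
        exact hTm0
      rcases Nat.lt_or_ge (d (j + m0)) (d (i + m0)) with hlt | hge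
      · obtain ⟨hv0, hwB⟩ := helper hβ (fun m => d (i + m0 + m)) (fun m => d (j + m0 + m))
          (fun m => hd _) (fun m => hd _) heq2 (by simpa using hlt)
        have h1 := hv0 p
        have h2 := hwB 0
        rw [show i + m0 + (p + 1) = j + m0 + (0 + 1) by omega] at h1
        omega
      · have hlt2 : d (i + m0) < d (j + m0) := by
          rcases Nat.lt_or_ge (d (i + m0)) (d (j + m0)) with h | h
          · exact h
          · exact absurd (le_antisymm hge h) (by simpa using hm0)
        obtain ⟨hv0, hwB⟩ := helper hβ (fun m => d (j + m0 + m)) (fun m => d (i + m0 + m))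
          (fun m => hd _) (fun m => hd _) heq2.symm (by simpa using hlt2)
        have h1 := hv0 0
        have h2 := hwB p
        rw [show j + m0 + (0 + 1) = i + m0 + (p + 1) by omega] at h1
        omega
  rcases hij0.lt_or_gt with h | h
  · exact main i0 j0 h hTeq0
  · exact main j0 i0 h hTeq0.symm

end St17

/-- if κ satisfies no relation κ(s,A+y) ≡ κ(1,A)·s·kʸ (mod L), then
for every β ≥ L, N ≥ 0 and l > 0, Σ_n a(N+n·l)/β^{n+1} is irrational, where
a(n) ∈ {0,…,L-1} is the canonical representative of gtm. -/
theorem stmt_17 (k L : ℕ) (hk : 1 < k) (hL : 1 < L) (κ : ℕ → ℕ → ZMod L)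
    (hnp : ¬ ∃ A : ℕ, ∀ s y : ℕ, 1 ≤ s → s ≤ k - 1 →
      κ s (A + y) = κ 1 A * (s : ZMod L) * (k : ZMod L) ^ y) :
    ∀ β : ℕ, L ≤ β → ∀ N l : ℕ, 0 < l →
      Irrational (∑' n : ℕ, ((gtm k L κ (N + n * l)).val : ℝ) / (β : ℝ) ^ (n + 1)) := by
  intro β hβL N l hl
  haveI : NeZero L := ⟨by omega⟩
  have hβ : 2 ≤ β := le_trans hL hβL
  by_contra hirr
  set d : ℕ → ℕ := fun n => (gtm k L κ (N + n * l)).val with hd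
  have hdlt : ∀ n, d n < β := fun n => lt_of_lt_of_le (ZMod.val_lt _) hβL
  have hconv : (∑' n : ℕ, ((gtm k L κ (N + n * l)).val : ℝ) / (β : ℝ) ^ (n + 1))
      = ∑' n : ℕ, (d n : ℝ) * ((β:ℝ)⁻¹) ^ (n + 1) :=
    tsum_congr (fun n => by rw [div_eq_mul_inv, inv_pow])
  rw [hconv] at hirr
  obtain ⟨p, hp, n0, hper0⟩ := St17.rat_periodic hβ d hdlt hirr
  have hvalinj : ∀ a b : ZMod L, a.val = b.val → a = b := by
    intro a b h
    have h1 : ((a.val : ℕ) : ZMod L) = ((b.val : ℕ) : ZMod L) := by rw [h]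
    rwa [ZMod.natCast_val, ZMod.natCast_val, ZMod.cast_id, ZMod.cast_id] at h1
  have hper : ∀ m, N + n0 * l ≤ m → m % l = N % l →
      gg k κ 0 (m + p * l) = gg k κ 0 m := by
    intro m hM hmod
    have hNm : N ≤ m := le_trans (Nat.le_add_right _ _) hM
    have hdvd : l ∣ m - N := (Nat.modEq_iff_dvd' hNm).mp hmod.symm
    obtain ⟨n, hn⟩ := hdvd
    have hmeq : m = N + n * l := by rw [mul_comm]; omega
    have hn0 : n0 ≤ n := by
      have h1 : N + n0 * l ≤ N + n * l := hmeq ▸ hM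
      have h2 : n0 * l ≤ n * l := by omega
      exact Nat.le_of_mul_le_mul_right h2 hl
    have h3 := hper0 n hn0
    have h4 : gtm k L κ (N + (n + p) * l) = gtm k L κ (N + n * l) := hvalinj _ _ h3
    rw [← gtm_eq_gg, ← gtm_eq_gg, hmeq, show N + n * l + p * l = N + (n + p) * l by ring]
    exact h4
  obtain ⟨A, hA⟩ := comb κ hk N l (p * l) (N + n0 * l) hl (dvd_mul_left l p)
    (Nat.mul_pos hp hl) hper
  exact hnp ⟨A, hA⟩
end

section
/- Let a : ℕ → ℂ be a k-adic expansion sequence with coefficients t_{s,y} ≠ 0, and suppose there exist N ≥ 0, l > 0 with a(N + t·l) = a(N) for all t ≥ 0. Then a(k^r · t · l) = 1 for all t ≥ 0 and all r greater than the largest exponent in the base-k expansion of N. -/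
open scoped BigOperators

/-- The k-adic expansion sequence determined by the nonzero coefficients t_{s,y}:
a(0) = 1 and a(n) = ∏_q t_{s_q, w_q} over the nonzero base-k digits of n. -/
def kadicSeq (k : ℕ) (t : ℕ → ℕ → ℂ) (n : ℕ) : ℂ :=
  ∏ y ∈ Finset.range (Nat.digits k n).length,
    if (Nat.digits k n).getD y 0 ≠ 0 then t ((Nat.digits k n).getD y 0) y else 1

def seqList (t : ℕ → ℕ → ℂ) (off : ℕ) (L : List ℕ) : ℂ :=
  ∏ y ∈ Finset.range L.length, if L.getD y 0 ≠ 0 then t (L.getD y 0) (y + off) else 1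

lemma seqList_append (t : ℕ → ℕ → ℂ) (off : ℕ) (L1 L2 : List ℕ) :
    seqList t off (L1 ++ L2) = seqList t off L1 * seqList t (L1.length + off) L2 := by
  unfold seqList
  rw [List.length_append, Finset.prod_range_add]
  congr 1
  · apply Finset.prod_congr rfl
    intro y hy
    rw [List.getD_append _ _ _ _ (Finset.mem_range.mp hy)]
  · apply Finset.prod_congr rfl
    intro y _
    rw [show L1.length + y = y + L1.length from Nat.add_comm _ _,
      List.getD_append_right _ _ _ _ (Nat.le_add_left _ _)]
    simp only [Nat.add_sub_cancel]
    rw [Nat.add_assoc]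

lemma seqList_replicate (t : ℕ → ℕ → ℂ) (off p : ℕ) :
    seqList t off (List.replicate p 0) = 1 := by
  unfold seqList
  apply Finset.prod_eq_one
  intro y hy
  simp [List.getD, List.getElem?_getD_replicate_default_eq]

lemma kadicSeq_eq_seqList (k : ℕ) (t : ℕ → ℕ → ℂ) (n : ℕ) :
    kadicSeq k t n = seqList t 0 (Nat.digits k n) := rfl

lemma kadicSeq_ne_zero (k : ℕ) (t : ℕ → ℕ → ℂ) (ht : ∀ s y, t s y ≠ 0) (n : ℕ) :
    kadicSeq k t n ≠ 0 := by
  unfold kadicSeq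
  apply Finset.prod_ne_zero_iff.mpr
  intro y _
  split
  · exact ht _ _
  · exact one_ne_zero

lemma kadicSeq_split (k : ℕ) (hk : 1 < k) (t : ℕ → ℕ → ℂ) (N r x : ℕ)
    (hr : (Nat.digits k N).length ≤ r) (hx : 0 < x) :
    kadicSeq k t (N + k ^ r * x) = kadicSeq k t N * kadicSeq k t (k ^ r * x) := by
  set M := (Nat.digits k N).length with hM
  obtain ⟨p, rfl⟩ : ∃ p, r = M + p := ⟨r - M, (Nat.add_sub_cancel' hr).symm⟩
  have h1 := Nat.digits_append_zeroes_append_digits (b := k) (k := p) (m := x) (n := N) hk hx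
  have h2 := Nat.digits_base_pow_mul (b := k) (k := M + p) (m := x) hk hx
  rw [kadicSeq_eq_seqList, kadicSeq_eq_seqList, kadicSeq_eq_seqList, ← h1, h2,
    show List.replicate (M + p) (0:ℕ) = List.replicate M 0 ++ List.replicate p 0 from
      List.replicate_add _ _ _,
    seqList_append, seqList_append, seqList_append, seqList_append, seqList_replicate,
    seqList_replicate, seqList_replicate]
  simp [List.length_replicate, List.length_append, hM]

/-- if a is a k-adic expansion sequence and the equally spaced
subsequence (a(N + t·l))_t is constant, then a(kʳ·t·l) = 1 for all t ≥ 0 and all r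
greater than the largest exponent in the base-k expansion of N (i.e. r ≥ the number
of base-k digits of N). -/
theorem stmt_18 (k : ℕ) (hk : 1 < k) (t : ℕ → ℕ → ℂ) (ht : ∀ s y, t s y ≠ 0)
    (N l : ℕ) (hl : 0 < l)
    (hper : ∀ m : ℕ, kadicSeq k t (N + m * l) = kadicSeq k t N) :
    ∀ r : ℕ, (Nat.digits k N).length ≤ r →
      ∀ m : ℕ, kadicSeq k t (k ^ r * m * l) = 1 := by
  intro r hr m
  rcases Nat.eq_zero_or_pos m with rfl | hm
  · simp [kadicSeq]
  have hx : 0 < m * l := Nat.mul_pos hm hl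
  have h1 := hper (k ^ r * m)
  rw [Nat.mul_assoc] at h1
  rw [show N + k ^ r * (m * l) = N + k ^ r * (m * l) from rfl,
    ← Nat.mul_assoc] at h1
  have h2 := kadicSeq_split k hk t N r (m * l) hr hx
  rw [← Nat.mul_assoc] at h2
  rw [h2] at h1
  have hN := kadicSeq_ne_zero k t ht N
  field_simp at h1
  exact h1
end
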